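/- arXiv:2301.09308 — 6 statements merged into one kernel-verified Lean document; each statement's English description precedes it below -/
import Mathlib

section
/- Let G be a group acting on a set X and let Y be a subset of X. If a collection C of G-invariant functions from X to ℝ is universally approximating over Y, then C is also pairwise Y_G discriminating. -/
/-- Two points lie in the same `G`-orbit. -/
def SameOrbit (G : Type*) {X : Type*} [Group G] [MulAction G X] (x₁ x₂ : X) : Prop :=
  ∃ g : G, g • x₁ = x₂

/-- A function is `G`-invariant. -/
def GInvariant (G : Type*) {X : Type*} [Group G] [MulAction G X] (h : X → ℝ) : Prop :=
  ∀ (g : G) (x : X), h (g • x) = h x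

/-- If a collection `C` of `G`-invariant functions from `X` to `ℝ` is universally
approximating over `Y ⊆ X`, then `C` is pairwise `Y_G` discriminating. -/
theorem universally_approximating_implies_pairwise_discriminating
    {G X : Type*} [Group G] [MulAction G X] (Y : Set X) (C : Set (X → ℝ))
    (hInv : ∀ h ∈ C, GInvariant G h)
    (hUniv : ∀ f : X → ℝ, GInvariant G f →
      ∀ ε > (0 : ℝ), ∃ h ∈ C, ∀ y ∈ Y, |f y - h y| < ε) :
    ∀ y₁ ∈ Y, ∀ y₂ ∈ Y, ¬ SameOrbit G y₁ y₂ → ∃ h ∈ C, h y₁ ≠ h y₂ := by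
  intro y₁ hy₁ y₂ hy₂ hno
  classical
  set f : X → ℝ := fun x => if SameOrbit G y₁ x then 1 else 0 with hf
  have hfinv : GInvariant G f := by
    intro g x
    simp only [hf]
    congr 1
    apply propext
    constructor
    · rintro ⟨g', hg'⟩
      exact ⟨g⁻¹ * g', by rw [mul_smul, hg', inv_smul_smul]⟩
    · rintro ⟨g', hg'⟩
      exact ⟨g * g', by rw [mul_smul, hg']⟩
  obtain ⟨h, hC, hh⟩ := hUniv f hfinv (1/2) (by norm_num)
  refine ⟨h, hC, ?_⟩
  have h1 := hh y₁ hy₁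
  have h2 := hh y₂ hy₂
  have : f y₁ = 1 := by simp only [hf]; exact if_pos (show SameOrbit G y₁ y₁ from ⟨1, one_smul _ _⟩)
  have : f y₂ = 0 := by simp [hf]; exact hno
  intro heq
  rw [heq] at h1
  simp_all
  cases abs_cases (1 - h y₂) <;> cases abs_cases (h y₂) <;> linarith
end

section
/- Let G be a group acting on a set X and let Y be a finite subset of X. If a collection C of G-invariant functions from X to ℝ is pairwise Y_G discriminating, then the class C^{+2} is universally approximating over Y. -/
/-- `IsMLP L k M` says that `M : ℝ^k → ℝ` is a multilayer perceptron with `L` affine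
layers whose hidden activations are the ReLU function applied componentwise. -/
def IsMLP : ℕ → (k : ℕ) → ((Fin k → ℝ) → ℝ) → Prop
  | 0, _, _ => False
  | 1, k, M => ∃ (w : Fin k → ℝ) (b : ℝ), M = fun x => (∑ i, w i * x i) + b
  | L + 2, k, M => ∃ (m : ℕ) (W : Matrix (Fin m) (Fin k) ℝ) (b : Fin m → ℝ)
      (M' : (Fin m → ℝ) → ℝ), IsMLP (L + 1) m M' ∧
        M = fun x => M' (fun i => max (W.mulVec x i + b i) 0)

/-- The class `C^{+L}`: all functions of the form `x ↦ M (f₁ x, …, f_k x)` with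
`k` finite, `f₁, …, f_k ∈ C`, and `M` an `L`-layer ReLU MLP. -/
def MLPClass {X : Type*} (L : ℕ) (C : Set (X → ℝ)) : Set (X → ℝ) :=
  { h | ∃ (k : ℕ) (f : Fin k → X → ℝ) (M : (Fin k → ℝ) → ℝ),
      (∀ i, f i ∈ C) ∧ IsMLP L k M ∧ ∀ x, h x = M (fun i => f i x) }

lemma aux_exists_w {k : ℕ} (D : Finset (Fin k → ℝ)) (hD : ∀ d ∈ D, d ≠ 0) :
    ∃ w : Fin k → ℝ, ∀ d ∈ D, (∑ i, w i * d i) ≠ 0 := by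
  classical
  set P : (Fin k → ℝ) → Polynomial ℝ :=
    fun d => ∑ i : Fin k, Polynomial.C (d i) * Polynomial.X ^ (i : ℕ) with hPdef
  have hP : ∀ d ∈ D, P d ≠ 0 := by
    intro d hd h0
    apply hD d hd
    funext i
    have hc := congrArg (fun p => Polynomial.coeff p (i : ℕ)) h0
    simpa [hPdef, Polynomial.finset_sum_coeff, Polynomial.coeff_C_mul,
      Polynomial.coeff_X_pow, Fin.val_eq_val] using hc
  have hroots : (⋃ d ∈ D, {x : ℝ | (P d).eval x = 0}).Finite :=
    Set.Finite.biUnion D.finite_toSet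
      (fun d hd => Polynomial.finite_setOf_isRoot (hP d hd))
  obtain ⟨t, ht⟩ := hroots.infinite_compl.nonempty
  refine ⟨fun i => t ^ (i : ℕ), ?_⟩
  intro d hd
  have hne : (P d).eval t ≠ 0 := by
    intro h
    exact ht (Set.mem_biUnion hd h)
  simp only [hPdef, Polynomial.eval_finset_sum, Polynomial.eval_mul, Polynomial.eval_C,
    Polynomial.eval_pow, Polynomial.eval_X] at hne
  simpa [mul_comm] using hne

lemma aux_hat {δ : ℝ} (hδ : 0 < δ) {Fv : ℝ} (T : ℝ) (hT : T = 0 ∨ δ ≤ |T|) :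
    Fv / δ * 1 * max (T + δ) 0 + Fv / δ * (-2) * max (T + 0) 0
      + Fv / δ * 1 * max (T + -δ) 0 = if T = 0 then Fv else 0 := by
  rcases hT with h | h
  · subst h
    rw [if_pos rfl]
    have h1 : max (0 + δ) 0 = δ := by rw [max_eq_left]; linarith; linarith
    have h2 : max ((0:ℝ) + 0) 0 = 0 := by simp
    have h3 : max (0 + -δ) 0 = 0 := by rw [max_eq_right]; linarith
    rw [h1, h2, h3]
    field_simp
    ring
  · rcases le_abs.mp h with h' | h'
    · have hT0 : T ≠ 0 := by intro h0; rw [h0] at h'; linarith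
      rw [if_neg hT0, max_eq_left (by linarith), max_eq_left (by linarith),
        max_eq_left (by linarith)]
      ring
    · have hT0 : T ≠ 0 := by intro h0; rw [h0] at h'; simp at h'; linarith
      rw [if_neg hT0, max_eq_right (by linarith), max_eq_right (by linarith),
        max_eq_right (by linarith)]
      ring


/-- If a collection `C` of `G`-invariant functions from `X` to `ℝ` is pairwise `Y_G`
discriminating over a finite subset `Y ⊆ X`, then `C^{+2}` is universally
approximating over `Y`. -/
theorem pairwise_discriminating_implies_plus_two_universally_approximating
    {G X : Type*} [Group G] [MulAction G X] (Y : Set X) (hY : Y.Finite)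
    (C : Set (X → ℝ))
    (hInv : ∀ h ∈ C, GInvariant G h)
    (hDisc : ∀ y₁ ∈ Y, ∀ y₂ ∈ Y, ¬ SameOrbit G y₁ y₂ → ∃ h ∈ C, h y₁ ≠ h y₂) :
    ∀ f : X → ℝ, GInvariant G f →
      ∀ ε > (0 : ℝ), ∃ h ∈ MLPClass 2 C, ∀ y ∈ Y, |f y - h y| < ε := by
  classical
  intro f hf ε hε
  set s : Finset X := hY.toFinset with hs
  set T : Finset (X × X) := (s ×ˢ s).filter (fun p => ¬ SameOrbit G p.1 p.2) with hT
  set k : ℕ := T.card with hk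
  set e : {p // p ∈ T} ≃ Fin k := T.equivFin with he
  have hsel : ∀ p : {q // q ∈ T}, ∃ h ∈ C, h p.1.1 ≠ h p.1.2 := by
    intro ⟨p, hp⟩
    rw [hT, Finset.mem_filter, Finset.mem_product] at hp
    exact hDisc p.1 (hY.mem_toFinset.mp hp.1.1) p.2 (hY.mem_toFinset.mp hp.1.2) hp.2
  choose gsel hgC hgne using hsel
  set Φ : X → Fin k → ℝ := fun x i => gsel (e.symm i) x with hΦ
  set D : Finset (Fin k → ℝ) :=
    ((s ×ˢ s).filter (fun p => Φ p.1 ≠ Φ p.2)).image (fun p => Φ p.1 - Φ p.2) with hD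
  have hD0 : ∀ d ∈ D, d ≠ 0 := by
    intro d hd
    rw [hD, Finset.mem_image] at hd
    obtain ⟨p, hp, rfl⟩ := hd
    rw [Finset.mem_filter] at hp
    exact sub_ne_zero.mpr hp.2
  obtain ⟨w, hw⟩ := aux_exists_w D hD0
  set t : X → ℝ := fun x => ∑ i, w i * Φ x i with ht
  -- key: equal t values on Y give equal f values
  have key : ∀ y₁ ∈ Y, ∀ y₂ ∈ Y, t y₁ = t y₂ → f y₁ = f y₂ := by
    intro y₁ h₁ y₂ h₂ hty
    have hΦeq : Φ y₁ = Φ y₂ := by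
      by_contra hne
      have hdmem : Φ y₁ - Φ y₂ ∈ D := by
        rw [hD, Finset.mem_image]
        refine ⟨(y₁, y₂), ?_, rfl⟩
        rw [Finset.mem_filter, Finset.mem_product]
        exact ⟨⟨hY.mem_toFinset.mpr h₁, hY.mem_toFinset.mpr h₂⟩, hne⟩
      apply hw _ hdmem
      have : ∑ i, w i * (Φ y₁ - Φ y₂) i = t y₁ - t y₂ := by
        simp [ht, mul_sub, Finset.sum_sub_distrib]
      rw [this, hty, sub_self]
    by_cases horb : SameOrbit G y₁ y₂
    · obtain ⟨g₀, hg₀⟩ := horb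
      rw [← hg₀, hf]
    · exfalso
      have hpT : (y₁, y₂) ∈ T := by
        rw [hT, Finset.mem_filter, Finset.mem_product]
        exact ⟨⟨hY.mem_toFinset.mpr h₁, hY.mem_toFinset.mpr h₂⟩, horb⟩
      apply hgne ⟨(y₁, y₂), hpT⟩
      have := congrFun hΦeq (e ⟨(y₁, y₂), hpT⟩)
      simpa [hΦ] using this
  set Z : Finset ℝ := s.image t with hZ
  set F : ℝ → ℝ := fun z => if hz : ∃ y, y ∈ Y ∧ t y = z then f hz.choose else 0 with hF
  have hFt : ∀ y ∈ Y, F (t y) = f y := by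
    intro y hy
    have hz : ∃ y', y' ∈ Y ∧ t y' = t y := ⟨y, hy, rfl⟩
    rw [hF]
    simp only [dif_pos hz]
    exact key _ hz.choose_spec.1 _ hy hz.choose_spec.2
  set S : Finset ℝ := insert (1:ℝ) (Z.offDiag.image (fun p => |p.1 - p.2|)) with hS
  have hSne : S.Nonempty := ⟨1, Finset.mem_insert_self _ _⟩
  set δ : ℝ := S.min' hSne with hδ
  have hδpos : 0 < δ := by
    have hm : S.min' hSne ∈ insert (1:ℝ) (Z.offDiag.image (fun p => |p.1 - p.2|)) :=
      S.min'_mem hSne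
    rcases Finset.mem_insert.mp hm with h1 | h1
    · linarith [hδ.trans h1]
    · rw [Finset.mem_image] at h1
      obtain ⟨p, hp, hpe⟩ := h1
      rw [Finset.mem_offDiag] at hp
      have h2 : δ = |p.1 - p.2| := hδ.trans hpe.symm
      have h3 : 0 < |p.1 - p.2| := abs_pos.mpr (sub_ne_zero.mpr hp.2.2)
      linarith
  have hδle : ∀ z₁ ∈ Z, ∀ z₂ ∈ Z, z₁ ≠ z₂ → δ ≤ |z₁ - z₂| := by
    intro z₁ h₁ z₂ h₂ hne
    apply S.min'_le
    rw [hS, Finset.mem_insert]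
    right
    rw [Finset.mem_image]
    exact ⟨(z₁, z₂), Finset.mem_offDiag.mpr ⟨h₁, h₂, hne⟩, rfl⟩
  -- build the network
  set n : ℕ := Z.card with hn
  set eZ : {z // z ∈ Z} ≃ Fin n := Z.equivFin with heZ
  set zval : Fin n → ℝ := fun a => (eZ.symm a : ℝ) with hzval
  set m : ℕ := n * 3 with hm
  set eι : Fin n × Fin 3 ≃ Fin m := finProdFinEquiv with heι
  set cvec : Fin 3 → ℝ := ![δ, 0, -δ] with hcvec
  set dvec : Fin 3 → ℝ := ![1, -2, 1] with hdvec
  set bv : Fin m → ℝ := fun j => cvec (eι.symm j).2 - zval (eι.symm j).1 with hbv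
  set uv : Fin m → ℝ := fun j => F (zval (eι.symm j).1) / δ * dvec (eι.symm j).2 with huv
  set W : Matrix (Fin m) (Fin k) ℝ := fun _ i => w i with hW
  set M' : (Fin m → ℝ) → ℝ := fun v => (∑ j, uv j * v j) + 0 with hM'
  set M : (Fin k → ℝ) → ℝ := fun v => M' (fun j => max (W.mulVec v j + bv j) 0) with hM
  refine ⟨fun x => M (fun i => gsel (e.symm i) x), ?_, ?_⟩
  · exact ⟨k, fun i => gsel (e.symm i), M, fun i => hgC _,
      ⟨m, W, bv, M', ⟨uv, 0, rfl⟩, rfl⟩, fun x => rfl⟩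
  · intro y hy
    have hmulvec : ∀ j, W.mulVec (Φ y) j = t y := by
      intro j
      rw [ht]
      rfl
    have htyZ : t y ∈ Z := by
      rw [hZ, Finset.mem_image]
      exact ⟨y, hY.mem_toFinset.mpr hy, rfl⟩
    have hMeval : M (Φ y) = f y := by
      rw [hM, hM']
      simp only [hmulvec]
      rw [add_zero]
      rw [← Equiv.sum_comp eι (fun j => uv j * max (t y + bv j) 0)]
      rw [Fintype.sum_prod_type]
      have hterm : ∀ a : Fin n,
          (∑ r : Fin 3, uv (eι (a, r)) * max (t y + bv (eι (a, r))) 0)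
            = if t y - zval a = 0 then F (t y) else 0 := by
        intro a
        have hbs : ∀ r, bv (eι (a, r)) = cvec r - zval a := by
          intro r; simp only [hbv, Equiv.symm_apply_apply]
        have hus : ∀ r, uv (eι (a, r)) = F (zval a) / δ * dvec r := by
          intro r; simp only [huv, Equiv.symm_apply_apply]
        simp only [hbs, hus]
        have harg : ∀ r, t y + (cvec r - zval a) = (t y - zval a) + cvec r := by
          intro r; ring
        simp only [harg]
        rw [Fin.sum_univ_three]
        simp only [hcvec, hdvec, Matrix.cons_val_zero, Matrix.cons_val_one, Matrix.head_cons,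
          Matrix.cons_val_two, Matrix.tail_cons]
        have hZa : zval a ∈ Z := by rw [hzval]; exact (eZ.symm a).2
        have hcase : t y - zval a = 0 ∨ δ ≤ |t y - zval a| := by
          by_cases hq : t y = zval a
          · left; rw [hq, sub_self]
          · right; exact hδle _ htyZ _ hZa hq
        have := aux_hat hδpos (Fv := F (zval a)) (t y - zval a) hcase
        rw [this]
        by_cases hq : t y - zval a = 0
        · rw [if_pos hq, if_pos hq]
          congr 1
          linarith [sub_eq_zero.mp hq]
        · rw [if_neg hq, if_neg hq]
      simp only [hterm]
      set a₀ : Fin n := eZ ⟨t y, htyZ⟩ with ha₀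
      have hza₀ : zval a₀ = t y := by
        rw [hzval, ha₀]
        show ((eZ.symm (eZ ⟨t y, htyZ⟩)) : ℝ) = t y
        rw [Equiv.symm_apply_apply]
      rw [Finset.sum_eq_single_of_mem a₀ (Finset.mem_univ _)]
      · rw [if_pos (by rw [hza₀, sub_self]), hFt y hy]
      · intro a _ hne
        rw [if_neg]
        intro h0
        apply hne
        have : zval a = zval a₀ := by rw [hza₀]; linarith [sub_eq_zero.mp h0]
        have h2 : eZ.symm a = eZ.symm a₀ := Subtype.ext this
        exact eZ.symm.injective h2
    calc |f y - M (Φ y)| = 0 := by rw [hMeval, sub_self, abs_zero]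
      _ < ε := hε
end

section
/- Let (X, d) be a metric space, G a compact topological group acting continuously on X, and Y a compact subset of X. If a collection C of G-invariant functions from X to ℝ can universally approximate every continuous G-invariant function on Y, then C is pairwise Y_G discriminating. -/
lemma abs_ciInf_sub_ciInf {ι : Sort*} [Nonempty ι] {f h : ι → ℝ}
    (hf : BddBelow (Set.range f)) (hh : BddBelow (Set.range h)) {ε : ℝ}
    (hfh : ∀ i, |f i - h i| ≤ ε) : |(⨅ i, f i) - ⨅ i, h i| ≤ ε := by
  rw [abs_sub_le_iff]
  constructor
  · have : (⨅ i, f i) - ε ≤ ⨅ i, h i := by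
      refine le_ciInf fun i => ?_
      have h1 := ciInf_le hf i
      have h2 := (abs_sub_le_iff.mp (hfh i)).1
      linarith
    linarith
  · have : (⨅ i, h i) - ε ≤ ⨅ i, f i := by
      refine le_ciInf fun i => ?_
      have h1 := ciInf_le hh i
      have h2 := (abs_sub_le_iff.mp (hfh i)).2
      linarith
    linarith

lemma continuous_ciInf_of_compact {G X : Type*} [TopologicalSpace G] [CompactSpace G]
    [Nonempty G] [TopologicalSpace X] {F : G → X → ℝ}
    (hF : Continuous fun p : G × X => F p.1 p.2) :
    Continuous fun x => ⨅ g, F g x := by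
  rw [continuous_iff_continuousAt]
  intro x₀
  rw [ContinuousAt, Metric.tendsto_nhds]
  intro ε hε
  set n : Set (G × X) := {p | dist (F p.1 p.2) (F p.1 x₀) < ε / 2} with hn
  have hnopen : IsOpen n := by
    have c1 : Continuous fun p : G × X => F p.1 p.2 := hF
    have c2 : Continuous fun p : G × X => F p.1 x₀ :=
      hF.comp (continuous_fst.prodMk continuous_const)
    exact isOpen_lt ((c1.dist c2)) continuous_const
  have hsub : (Set.univ : Set G) ×ˢ ({x₀} : Set X) ⊆ n := by
    rintro ⟨g, x⟩ ⟨-, hx⟩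
    rcases hx with rfl
    simp [hn, hε]
  obtain ⟨u, v, hu, hv, huu, hvv, huv⟩ :=
    generalized_tube_lemma isCompact_univ isCompact_singleton hnopen hsub
  have hx₀v : x₀ ∈ v := hvv rfl
  filter_upwards [hv.mem_nhds hx₀v] with x hx
  have key : ∀ g : G, |F g x - F g x₀| ≤ ε / 2 := by
    intro g
    have : (g, x) ∈ n := huv ⟨huu trivial, hx⟩
    exact le_of_lt (by simpa [hn, Real.dist_eq] using this)
  have b1 : BddBelow (Set.range fun g => F g x) := by
    have := (isCompact_univ (X := G)).bddBelow_image
      (f := fun g => F g x) (hF.comp (continuous_id.prodMk continuous_const)).continuousOn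
    simpa [Set.image_univ] using this
  have b2 : BddBelow (Set.range fun g => F g x₀) := by
    have := (isCompact_univ (X := G)).bddBelow_image
      (f := fun g => F g x₀) (hF.comp (continuous_id.prodMk continuous_const)).continuousOn
    simpa [Set.image_univ] using this
  have := abs_ciInf_sub_ciInf b1 b2 key
  rw [Real.dist_eq]
  linarith

set_option maxHeartbeats 1000000 in
/-- Let `X` be a metric space, `G` a compact topological group acting continuously on `X`,
and `Y` a compact subset of `X`.  If a collection `C` of `G`-invariant functions from `X`
to `ℝ` universally approximates every continuous `G`-invariant function on `Y`, then `C`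
is pairwise `Y_G` discriminating. -/
theorem continuous_universally_approximating_implies_pairwise_discriminating
    {G X : Type*} [Group G] [TopologicalSpace G] [IsTopologicalGroup G] [CompactSpace G]
    [MetricSpace X] [MulAction G X] [ContinuousSMul G X]
    (Y : Set X) (hY : IsCompact Y) (C : Set (X → ℝ))
    (hInv : ∀ h ∈ C, GInvariant G h)
    (hUniv : ∀ f : X → ℝ, Continuous f → GInvariant G f →
      ∀ ε > (0 : ℝ), ∃ h ∈ C, ∀ y ∈ Y, |f y - h y| < ε) :
    ∀ y₁ ∈ Y, ∀ y₂ ∈ Y, ¬ SameOrbit G y₁ y₂ → ∃ h ∈ C, h y₁ ≠ h y₂ := by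
  intro y₁ hy₁ y₂ hy₂ hne
  haveI : Nonempty G := ⟨1⟩
  -- the orbit of `y₁` is a nonempty compact (hence closed) set
  set T : Set X := Set.range fun g : G => g • y₁ with hT
  have hTne : T.Nonempty := ⟨y₁, 1, one_smul G y₁⟩
  have hTcompact : IsCompact T :=
    isCompact_range ((continuous_id.smul continuous_const))
  have hTclosed : IsClosed T := hTcompact.isClosed
  -- the separating invariant function
  set F : G → X → ℝ := fun g x => Metric.infDist (g • x) T with hF
  have hFcont : Continuous fun p : G × X => F p.1 p.2 :=
    (Metric.continuous_infDist_pt T).comp continuous_smul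
  set f : X → ℝ := fun x => ⨅ g, F g x with hf
  have hbdd : ∀ x : X, BddBelow (Set.range fun g => F g x) := by
    intro x
    refine ⟨0, ?_⟩
    rintro r ⟨g, rfl⟩
    exact Metric.infDist_nonneg
  have hfcont : Continuous f := continuous_ciInf_of_compact hFcont
  have hfinv : GInvariant G f := by
    intro h x
    show (⨅ g, Metric.infDist (g • h • x) T) = ⨅ g, Metric.infDist (g • x) T
    have hrw : ∀ g : G, g • h • x = (g * h) • x := fun g => (mul_smul g h x).symm
    simp only [hrw]
    have hrange : (Set.range fun g : G => Metric.infDist ((g * h) • x) T) =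
        Set.range fun g : G => Metric.infDist (g • x) T := by
      ext r
      constructor
      · rintro ⟨g, rfl⟩; exact ⟨g * h, rfl⟩
      · rintro ⟨g, rfl⟩; exact ⟨g * h⁻¹, by simp [inv_mul_cancel_right]⟩
    show sInf (Set.range fun g : G => Metric.infDist ((g * h) • x) T) =
      sInf (Set.range fun g : G => Metric.infDist (g • x) T)
    rw [hrange]
  have hfy₁ : f y₁ = 0 := by
    refine le_antisymm ?_ (le_ciInf fun g => Metric.infDist_nonneg)
    have h1 : F 1 y₁ = 0 := by
      have : (1 : G) • y₁ ∈ T := ⟨1, rfl⟩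
      simpa [hF] using Metric.infDist_zero_of_mem this
    calc f y₁ ≤ F 1 y₁ := ciInf_le (hbdd y₁) 1
    _ = 0 := h1
  have hfy₂ : 0 < f y₂ := by
    have hc : Continuous fun g : G => F g y₂ :=
      hFcont.comp (continuous_id.prodMk continuous_const)
    obtain ⟨g₀, -, hg₀⟩ :=
      isCompact_univ.exists_isMinOn Set.univ_nonempty hc.continuousOn
    have hnotmem : g₀ • y₂ ∉ T := by
      rintro ⟨g, hg⟩
      have hg' : g • y₁ = g₀ • y₂ := hg
      exact hne ⟨g₀⁻¹ * g, by rw [mul_smul, hg', inv_smul_smul]⟩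
    have hpos : 0 < F g₀ y₂ :=
      (hTclosed.notMem_iff_infDist_pos hTne).mp hnotmem
    have : F g₀ y₂ ≤ f y₂ := le_ciInf fun g => hg₀ (Set.mem_univ g)
    linarith
  obtain ⟨h, hC, hh⟩ := hUniv f hfcont hfinv (f y₂ / 3) (by linarith)
  refine ⟨h, hC, ?_⟩
  intro heq
  have h1 := hh y₁ hy₁
  have h2 := hh y₂ hy₂
  rw [hfy₁] at h1
  rw [abs_lt] at h1 h2
  rw [heq] at h1
  obtain ⟨h1a, h1b⟩ := h1
  obtain ⟨h2a, h2b⟩ := h2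
  linarith
end

section
/- Let X be a compact metric space and G a compact topological group acting continuously on X. If C is a collection of continuous G-invariant functions from X to ℝ that is pairwise X_G discriminating, then the class C^{+2} can universally approximate every continuous G-invariant function on X: for every continuous G-invariant f : X → ℝ and every ε > 0 there exists h ∈ C^{+2} with sup_{x∈X} |f(x) − h(x)| < ε. -/
lemma relu_pl_approx (g : ℝ → ℝ) (hg : Continuous g) (A B : ℝ) (hAB : A < B)
    {ε : ℝ} (hε : 0 < ε) :
    ∃ (n : ℕ) (s μ : Fin n → ℝ) (c : ℝ),
      ∀ t ∈ Set.Icc A B, |g t - (c + ∑ j, s j * max (t + μ j) 0)| ≤ ε := by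
  -- uniform continuity on [A, B]
  have hUC : UniformContinuousOn g (Set.Icc A B) :=
    (isCompact_Icc).uniformContinuousOn_of_continuous (hg.continuousOn)
  rw [Metric.uniformContinuousOn_iff] at hUC
  obtain ⟨δ, hδ, hδ'⟩ := hUC (ε / 2) (by linarith)
  obtain ⟨n, hn⟩ := exists_nat_gt (max 1 ((B - A) / δ))
  have hn1 : 1 ≤ (n : ℝ) := le_of_lt (lt_of_le_of_lt (le_max_left _ _) hn)
  have hnpos : (0 : ℝ) < n := by linarith
  set Δ : ℝ := (B - A) / n with hΔdef
  have hΔpos : 0 < Δ := div_pos (by linarith) hnpos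
  have hΔδ : Δ < δ := by
    rw [div_lt_iff₀ hnpos]
    have : (B - A) / δ < n := lt_of_le_of_lt (le_max_right _ _) hn
    rw [div_lt_iff₀ hδ] at this
    linarith [this]
  set pt : ℕ → ℝ := fun j => A + j * Δ with hptdef
  set sl : ℕ → ℝ := fun j => (g (pt (j + 1)) - g (pt j)) / Δ with hsldef
  set s : ℕ → ℝ := fun j => match j with
    | 0 => sl 0
    | (j + 1) => sl (j + 1) - sl j
    with hsdef
  have hptstep : ∀ j : ℕ, pt (j + 1) - pt j = Δ := by
    intro j; simp only [hptdef]; push_cast; ring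
  have hslΔ : ∀ j : ℕ, sl j * Δ = g (pt (j + 1)) - g (pt j) := by
    intro j; simp only [hsldef]; field_simp
  -- telescoping identity
  have tele : ∀ (i : ℕ) (t : ℝ), ∑ j ∈ Finset.range (i + 1), s j * (t - pt j)
      = g (pt i) - g (pt 0) + sl i * (t - pt i) := by
    intro i
    induction i with
    | zero => intro t; simp [hsdef]
    | succ i ih =>
      intro t
      rw [Finset.sum_range_succ, ih t]
      have h1 := hslΔ i
      have h2 := hptstep (i + 1)
      have h3 := hptstep i
      show _ + s (i+1) * _ = _
      have hs : s (i + 1) = sl (i + 1) - sl i := rfl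
      rw [hs]
      linear_combination h1 + sl i * h3
  refine ⟨n, fun j => s j, fun j => -(pt j), g (pt 0), ?_⟩
  intro t ht
  obtain ⟨htA, htB⟩ := ht
  -- locate the subinterval
  have hBpt : pt n = B := by simp only [hptdef, hΔdef]; field_simp; ring
  obtain ⟨i, hin, hti, hti'⟩ : ∃ i : ℕ, i < n ∧ pt i ≤ t ∧ t ≤ pt (i + 1) := by
    have hnn : 1 ≤ n := by exact_mod_cast hn1
    set i0 : ℕ := ⌊(t - A) / Δ⌋₊ with hi0
    by_cases hc : i0 ≤ n - 1
    · refine ⟨i0, by omega, ?_, ?_⟩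
      · have h1 : (i0 : ℝ) ≤ (t - A) / Δ := Nat.floor_le (div_nonneg (by linarith) hΔpos.le)
        rw [le_div_iff₀ hΔpos] at h1
        simp only [hptdef]; linarith
      · have h2 : (t - A) / Δ < i0 + 1 := Nat.lt_floor_add_one _
        rw [div_lt_iff₀ hΔpos] at h2
        simp only [hptdef]; push_cast; nlinarith
    · refine ⟨n - 1, by omega, ?_, ?_⟩
      · -- i0 ≥ n, so t ≥ A + n Δ ≥ ... hence t = B ≥ pt (n-1)
        have h1 : ((n : ℝ) - 1) * Δ ≤ t - A := by
          have hfl : (n : ℝ) ≤ i0 := by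
            have : n ≤ i0 := by omega
            exact_mod_cast this
          have h1' : (i0 : ℝ) ≤ (t - A) / Δ := Nat.floor_le (div_nonneg (by linarith) hΔpos.le)
          rw [le_div_iff₀ hΔpos] at h1'
          nlinarith
        simp only [hptdef]
        push_cast [Nat.cast_sub (by omega : 1 ≤ n)]
        linarith
      · have : n - 1 + 1 = n := by omega
        rw [this, hBpt]; exact htB
  have hptmono : ∀ a b : ℕ, a ≤ b → pt a ≤ pt b := by
    intro a b hab
    simp only [hptdef]
    have : (a : ℝ) ≤ b := by exact_mod_cast hab
    nlinarith
  -- evaluate the network at t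
  have heval : ∑ j : Fin n, s j * max (t + -(pt j)) 0
      = ∑ j ∈ Finset.range (i + 1), s j * (t - pt j) := by
    rw [Fin.sum_univ_eq_sum_range (fun j => s j * max (t + -(pt j)) 0)]
    rw [← Finset.sum_range_add_sum_Ico _ (by omega : i + 1 ≤ n)]
    have hz : ∑ j ∈ Finset.Ico (i + 1) n, s j * max (t + -(pt j)) 0 = 0 := by
      apply Finset.sum_eq_zero
      intro j hj
      rw [Finset.mem_Ico] at hj
      have : t ≤ pt j := le_trans hti' (hptmono _ _ hj.1)
      rw [max_eq_right (by linarith)]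
      ring
    rw [hz, add_zero]
    apply Finset.sum_congr rfl
    intro j hj
    rw [Finset.mem_range] at hj
    have : pt j ≤ t := le_trans (hptmono _ _ (by omega)) hti
    rw [max_eq_left (by linarith)]
    ring
  rw [heval, tele i t]
  -- error bound
  have hptiA : A ≤ pt i := by
    simp only [hptdef]
    have : (0:ℝ) ≤ (i:ℝ) * Δ := by positivity
    linarith
  have hptiB : pt (i + 1) ≤ B := by
    calc pt (i + 1) ≤ pt n := hptmono _ _ (by omega)
    _ = B := hBpt
  have hmemi : pt i ∈ Set.Icc A B := ⟨hptiA, le_trans hti htB⟩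
  have hmemi' : pt (i + 1) ∈ Set.Icc A B := ⟨le_trans hptiA (hptmono i (i+1) (by omega)), hptiB⟩
  have htmem : t ∈ Set.Icc A B := ⟨htA, htB⟩
  have hd1 : |g t - g (pt i)| < ε / 2 := by
    have := hδ' t htmem (pt i) hmemi (by
      rw [Real.dist_eq, abs_lt]
      constructor <;> [linarith [hptstep i]; linarith [hptstep i]])
    rwa [Real.dist_eq] at this
  have hd2 : |g (pt (i + 1)) - g (pt i)| < ε / 2 := by
    have := hδ' (pt (i+1)) hmemi' (pt i) hmemi (by
      rw [Real.dist_eq, abs_lt]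
      constructor <;> [linarith [hptstep i]; linarith [hptstep i]])
    rwa [Real.dist_eq] at this
  have hslbd : |sl i * (t - pt i)| ≤ |g (pt (i + 1)) - g (pt i)| := by
    rw [abs_mul]
    have h1 : |sl i| = |g (pt (i + 1)) - g (pt i)| / Δ := by
      simp only [hsldef]
      rw [abs_div, abs_of_pos hΔpos]
    rw [h1]
    rw [div_mul_eq_mul_div, div_le_iff₀ hΔpos]
    have h2 : |t - pt i| ≤ Δ := by
      rw [abs_of_nonneg (by linarith)]
      linarith [hptstep i]
    nlinarith [abs_nonneg (g (pt (i + 1)) - g (pt i))]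
  calc |g t - (g (pt 0) + (g (pt i) - g (pt 0) + sl i * (t - pt i)))|
      = |(g t - g (pt i)) - sl i * (t - pt i)| := by ring_nf
    _ ≤ |g t - g (pt i)| + |sl i * (t - pt i)| := abs_sub _ _
    _ ≤ ε / 2 + ε / 2 := by
        have := le_trans hslbd (le_of_lt hd2)
        linarith [le_of_lt hd1]
    _ = ε := by ring

open ContinuousMap

lemma mem_closure_of_pointwise_pair_matching {X : Type*} [TopologicalSpace X] [CompactSpace X]
    (L : Set C(X, ℝ)) (nX : Nonempty X)
    (inf_mem : ∀ f ∈ L, ∀ g ∈ L, f ⊓ g ∈ L)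
    (sup_mem : ∀ f ∈ L, ∀ g ∈ L, f ⊔ g ∈ L)
    (f : C(X, ℝ)) (sep : ∀ x y : X, ∃ g ∈ L, g x = f x ∧ g y = f y) :
    f ∈ closure L := by
  refine
    Filter.Frequently.mem_closure
      ((Filter.HasBasis.frequently_iff Metric.nhds_basis_ball).mpr fun ε pos => ?_)
  simp only [exists_prop, Metric.mem_ball]
  choose g hg w₁ w₂ using sep
  let U : X → X → Set X := fun x y => {z | f z - ε < g x y z}
  have U_nhd_y : ∀ x y, U x y ∈ nhds y := by
    intro x y
    refine IsOpen.mem_nhds ?_ ?_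
    · apply isOpen_lt <;> continuity
    · rw [Set.mem_setOf_eq, w₂]
      exact sub_lt_self _ pos
  let ys : X → Finset X := fun x => (CompactSpace.elim_nhds_subcover (U x) (U_nhd_y x)).choose
  let ys_w : ∀ x, ⋃ y ∈ ys x, U x y = ⊤ := fun x =>
    (CompactSpace.elim_nhds_subcover (U x) (U_nhd_y x)).choose_spec
  have ys_nonempty : ∀ x, (ys x).Nonempty := fun x =>
    Set.nonempty_of_union_eq_top_of_nonempty _ _ nX (ys_w x)
  let h : X → L := fun x =>
    ⟨(ys x).sup' (ys_nonempty x) fun y => (g x y : C(X, ℝ)),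
      Finset.sup'_mem _ sup_mem _ _ _ fun y _ => hg x y⟩
  have lt_h : ∀ x z, f z - ε < (h x : X → ℝ) z := by
    intro x z
    obtain ⟨y, ym, zm⟩ := Set.exists_set_mem_of_union_eq_top _ _ (ys_w x) z
    dsimp [h]
    simp only [coe_sup', Finset.sup'_apply, Finset.lt_sup'_iff]
    exact ⟨y, ym, zm⟩
  have h_eq : ∀ x, (h x : X → ℝ) x = f x := by
    intro x
    simp only [h, coe_sup', Finset.sup'_apply]
    apply le_antisymm
    · apply Finset.sup'_le
      intro y _
      rw [w₁]
    · obtain ⟨y, hy⟩ := ys_nonempty x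
      exact le_trans (le_of_eq (w₁ x y).symm) (Finset.le_sup' (fun a => (g x a) x) hy)
  let W : X → Set X := fun x => {z | (h x : X → ℝ) z < f z + ε}
  have W_nhd : ∀ x, W x ∈ nhds x := by
    intro x
    refine IsOpen.mem_nhds ?_ ?_
    · apply isOpen_lt <;> fun_prop
    · dsimp only [W, Set.mem_setOf_eq]
      rw [Set.mem_setOf_eq, h_eq]
      exact lt_add_of_pos_right _ pos
  let xs : Finset X := (CompactSpace.elim_nhds_subcover W W_nhd).choose
  let xs_w : ⋃ x ∈ xs, W x = ⊤ := (CompactSpace.elim_nhds_subcover W W_nhd).choose_spec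
  have xs_nonempty : xs.Nonempty := Set.nonempty_of_union_eq_top_of_nonempty _ _ nX xs_w
  let k : (L : Type _) :=
    ⟨xs.inf' xs_nonempty fun x => (h x : C(X, ℝ)),
      Finset.inf'_mem _ inf_mem _ _ _ fun x _ => (h x).2⟩
  refine ⟨k.1, ?_, k.2⟩
  rw [dist_lt_iff pos]
  intro z
  rw [show ∀ a b ε : ℝ, dist a b < ε ↔ a < b + ε ∧ b - ε < a by
        intros; simp only [← Metric.mem_ball, Real.ball_eq_Ioo, Set.mem_Ioo, and_comm]]
  fconstructor
  · dsimp only [k]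
    simp only [Finset.inf'_lt_iff, ContinuousMap.inf'_apply]
    exact Set.exists_set_mem_of_union_eq_top _ _ xs_w z
  · dsimp only [k]
    simp only [Finset.lt_inf'_iff, ContinuousMap.inf'_apply]
    rintro x -
    apply lt_h

lemma mlp2_iff {X : Type*} (C : Set (X → ℝ)) (h : X → ℝ) :
    h ∈ MLPClass 2 C ↔ ∃ (k m : ℕ) (f : Fin k → X → ℝ) (w : Fin m → ℝ)
      (W : Matrix (Fin m) (Fin k) ℝ) (b : Fin m → ℝ) (c : ℝ), (∀ i, f i ∈ C) ∧
      ∀ x, h x = (∑ j, w j * max ((∑ i, W j i * f i x) + b j) 0) + c := by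
  constructor
  · rintro ⟨k, f, M, hf, hM, hMx⟩
    simp only [IsMLP] at hM
    obtain ⟨m, W, b, M', ⟨w, c, rfl⟩, rfl⟩ := hM
    refine ⟨k, m, f, w, W, b, c, hf, fun x => ?_⟩
    rw [hMx]
    simp [Matrix.mulVec, dotProduct]
  · rintro ⟨k, m, f, w, W, b, c, hf, hx⟩
    refine ⟨k, f, fun v => (∑ j, w j * max ((∑ i, W j i * v i) + b j) 0) + c, hf, ?_, fun x => ?_⟩
    · simp only [IsMLP]
      exact ⟨m, W, b, fun u => (∑ j, w j * u j) + c, ⟨w, c, rfl⟩, by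
        funext v; simp [Matrix.mulVec, dotProduct]⟩
    · exact hx x

lemma mlp2_zero {X : Type*} (C : Set (X → ℝ)) : (fun _ : X => (0:ℝ)) ∈ MLPClass 2 C := by
  rw [mlp2_iff]
  exact ⟨0, 0, Fin.elim0, Fin.elim0, fun j => j.elim0, Fin.elim0, 0, fun i => i.elim0,
    fun x => by simp⟩

lemma mlp2_ridge {X : Type*} (C : Set (X → ℝ)) (k : ℕ) (f : Fin k → X → ℝ) (a : Fin k → ℝ)
    (b : ℝ) (hf : ∀ i, f i ∈ C) :
    (fun x : X => max ((∑ i, a i * f i x) + b) 0) ∈ MLPClass 2 C := by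
  rw [mlp2_iff]
  exact ⟨k, 1, f, fun _ => 1, fun _ i => a i, fun _ => b, 0, hf, fun x => by simp⟩

lemma mlp2_smul {X : Type*} (C : Set (X → ℝ)) (a : ℝ) (h : X → ℝ) (hh : h ∈ MLPClass 2 C) :
    (fun x : X => a * h x) ∈ MLPClass 2 C := by
  rw [mlp2_iff] at hh ⊢
  obtain ⟨k, m, f, w, W, b, c, hf, hx⟩ := hh
  refine ⟨k, m, f, fun j => a * w j, W, b, a * c, hf, fun x => ?_⟩
  rw [hx x, mul_add, Finset.mul_sum]
  congr 1
  exact Finset.sum_congr rfl fun j _ => by ring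

lemma mlp2_add {X : Type*} (C : Set (X → ℝ)) (h₁ h₂ : X → ℝ)
    (H1 : h₁ ∈ MLPClass 2 C) (H2 : h₂ ∈ MLPClass 2 C) :
    (fun x : X => h₁ x + h₂ x) ∈ MLPClass 2 C := by
  rw [mlp2_iff] at H1 H2 ⊢
  obtain ⟨k₁, m₁, f₁, w₁, W₁, b₁, c₁, hf₁, hx₁⟩ := H1
  obtain ⟨k₂, m₂, f₂, w₂, W₂, b₂, c₂, hf₂, hx₂⟩ := H2
  refine ⟨k₁ + k₂, m₁ + m₂, Fin.append f₁ f₂, Fin.append w₁ w₂,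
    Matrix.of fun j i => Matrix.fromBlocks W₁ 0 0 W₂ (finSumFinEquiv.symm j) (finSumFinEquiv.symm i),
    Fin.append b₁ b₂, c₁ + c₂, ?_, fun x => ?_⟩
  · intro i
    refine Fin.addCases (fun i₁ => ?_) (fun i₂ => ?_) i
    · rw [Fin.append_left]; exact hf₁ i₁
    · rw [Fin.append_right]; exact hf₂ i₂
  · rw [hx₁ x, hx₂ x]
    have inner : ∀ j : Fin (m₁ + m₂),
        (∑ i, Matrix.of (fun j i => Matrix.fromBlocks W₁ 0 0 W₂ (finSumFinEquiv.symm j)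
          (finSumFinEquiv.symm i)) j i * Fin.append f₁ f₂ i x) =
        Sum.elim (fun j₁ => ∑ i, W₁ j₁ i * f₁ i x) (fun j₂ => ∑ i, W₂ j₂ i * f₂ i x)
          (finSumFinEquiv.symm j) := by
      intro j
      rw [Fin.sum_univ_add]
      rcases h : finSumFinEquiv.symm j with j₁ | j₂ <;>
        simp [h, Fin.append_left, Fin.append_right, finSumFinEquiv_symm_apply_castAdd,
          finSumFinEquiv_symm_apply_natAdd, Matrix.fromBlocks_apply₁₁, Matrix.fromBlocks_apply₁₂,
          Matrix.fromBlocks_apply₂₁, Matrix.fromBlocks_apply₂₂]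
    conv_rhs => rw [Fin.sum_univ_add]
    simp only [inner, finSumFinEquiv_symm_apply_castAdd, finSumFinEquiv_symm_apply_natAdd,
      Sum.elim_inl, Sum.elim_inr, Fin.append_left, Fin.append_right]
    ring


/-- Let `X` be a compact metric space and `G` a compact topological group acting
continuously on `X`.  If `C` is a collection of continuous `G`-invariant functions from
`X` to `ℝ` that is pairwise `X_G` discriminating, then the class `C^{+2}` can universally
approximate every continuous `G`-invariant function on `X`. -/
theorem pairwise_discriminating_implies_plus_two_universal_continuous
    {G X : Type*} [Group G] [TopologicalSpace G] [IsTopologicalGroup G] [CompactSpace G]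
    [MetricSpace X] [CompactSpace X] [MulAction G X] [ContinuousSMul G X]
    (C : Set (X → ℝ))
    (hCont : ∀ h ∈ C, Continuous h)
    (hInv : ∀ h ∈ C, GInvariant G h)
    (hDisc : ∀ x₁ x₂ : X, ¬ SameOrbit G x₁ x₂ → ∃ h ∈ C, h x₁ ≠ h x₂) :
    ∀ f : X → ℝ, Continuous f → GInvariant G f →
      ∀ ε > (0 : ℝ), ∃ h ∈ MLPClass 2 C, ∀ x : X, |f x - h x| < ε := by
  classical
  intro f hf hfInv ε hε
  rcases isEmpty_or_nonempty X with hX | hX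
  · exact ⟨_, mlp2_zero C, fun x => isEmptyElim x⟩
  set F : C(X, ℝ) := ⟨f, hf⟩ with hFdef
  -- the set of single ReLU-ridge functions built from C
  set Ridge : Set C(X, ℝ) := {ψ | ∃ (k : ℕ) (v : Fin k → X → ℝ) (a : Fin k → ℝ) (b : ℝ),
      (∀ i, v i ∈ C) ∧ ∀ x, ψ x = max ((∑ i, a i * v i x) + b) 0} with hRidgedef
  set T : Submodule ℝ C(X, ℝ) := (Submodule.span ℝ Ridge).topologicalClosure with hTdef
  have hT_closed : IsClosed (T : Set C(X, ℝ)) := Submodule.isClosed_topologicalClosure _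
  -- the submonoid of exponentials of linear combinations of elements of C
  set GeM : Submonoid C(X, ℝ) :=
    { carrier := {φ | ∃ (k : ℕ) (v : Fin k → X → ℝ) (a : Fin k → ℝ),
        (∀ i, v i ∈ C) ∧ ∀ x, φ x = Real.exp (∑ i, a i * v i x)},
      one_mem' := ⟨0, Fin.elim0, Fin.elim0, fun i => i.elim0, fun x => by simp⟩,
      mul_mem' := by
        rintro φ ψ ⟨k₁, v₁, a₁, hv₁, h₁⟩ ⟨k₂, v₂, a₂, hv₂, h₂⟩
        refine ⟨k₁ + k₂, Fin.append v₁ v₂, Fin.append a₁ a₂, ?_, fun x => ?_⟩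
        · intro i
          refine Fin.addCases (fun i₁ => ?_) (fun i₂ => ?_) i
          · rw [Fin.append_left]; exact hv₁ i₁
          · rw [Fin.append_right]; exact hv₂ i₂
        · simp only [ContinuousMap.mul_apply, h₁ x, h₂ x, Fin.sum_univ_add,
            Fin.append_left, Fin.append_right, ← Real.exp_add] } with hGeMdef
  -- every exponential generator is in the closure of the span of ridge functions
  have hGeT : (GeM : Set C(X, ℝ)) ⊆ (T : Set C(X, ℝ)) := by
    rintro φ ⟨k, v, a, hv, hφ⟩
    have hvc : ∀ i, Continuous (v i) := fun i => hCont _ (hv i)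
    set q : C(X, ℝ) := ⟨fun x => ∑ i, a i * v i x, by
      exact continuous_finset_sum _ fun i _ => continuous_const.mul (hvc i)⟩ with hqdef
    set R : ℝ := ‖q‖ + 1 with hRdef
    have hRpos : 0 < R := by have := norm_nonneg q; linarith
    show φ ∈ (T : Set C(X, ℝ))
    rw [hTdef, SetLike.mem_coe, ← SetLike.mem_coe, Submodule.topologicalClosure_coe,
      Metric.mem_closure_iff]
    intro ε' hε'
    obtain ⟨n, s, μ, c, hpl⟩ := relu_pl_approx Real.exp Real.continuous_exp (-R) R
      (by linarith) (half_pos hε')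
    set one_r : C(X, ℝ) := ⟨fun _ => max ((0:ℝ) + 1) 0, continuous_const⟩ with honedef
    have hone_r : one_r ∈ Ridge := ⟨0, Fin.elim0, Fin.elim0, 1, fun i => i.elim0,
      fun x => by simp [honedef]⟩
    set rj : Fin n → C(X, ℝ) := fun j => ⟨fun x => max (q x + μ j) 0, by
      exact (q.continuous.add continuous_const).max continuous_const⟩ with hrjdef
    have hrjR : ∀ j, rj j ∈ Ridge := fun j => ⟨k, v, a, μ j, hv, fun x => rfl⟩
    set ψ : C(X, ℝ) := c • one_r + ∑ j, s j • rj j with hψdef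
    have hψmem : ψ ∈ Submodule.span ℝ Ridge :=
      Submodule.add_mem _ (Submodule.smul_mem _ _ (Submodule.subset_span hone_r))
        (Submodule.sum_mem _ fun j _ => Submodule.smul_mem _ _ (Submodule.subset_span (hrjR j)))
    refine ⟨ψ, hψmem, ?_⟩
    rw [ContinuousMap.dist_lt_iff hε']
    intro x
    have hqx : q x ∈ Set.Icc (-R) R := by
      have h1 : ‖q x‖ ≤ ‖q‖ := ContinuousMap.norm_coe_le_norm q x
      rw [Real.norm_eq_abs, abs_le] at h1
      constructor <;> [linarith [h1.1]; linarith [h1.2]]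
    have hplx := hpl (q x) hqx
    have h01 : max ((0:ℝ) + 1) 0 = 1 := by
      rw [max_eq_left (by norm_num : (0:ℝ) ≤ 0 + 1)]; norm_num
    have hψx : ψ x = c + ∑ j, s j * max (q x + μ j) 0 := by
      simp [hψdef, honedef, hrjdef, h01, mul_comm]
    rw [Real.dist_eq, hφ x, hψx]
    calc |Real.exp (q x) - (c + ∑ j, s j * max (q x + μ j) 0)| ≤ ε' / 2 := hplx
      _ < ε' := by linarith
  -- the subalgebra generated by the exponentials, and its closure
  set A : Subalgebra ℝ C(X, ℝ) := Algebra.adjoin ℝ (GeM : Set C(X, ℝ)) with hAdef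
  have hAT : (A : Set C(X, ℝ)) ⊆ (T : Set C(X, ℝ)) := by
    intro p hp
    have h1 : Subalgebra.toSubmodule (Algebra.adjoin ℝ (GeM : Set C(X, ℝ)))
        = Submodule.span ℝ ((Submonoid.closure (GeM : Set C(X, ℝ))) : Set C(X, ℝ)) :=
      Algebra.adjoin_eq_span ℝ (GeM : Set C(X, ℝ))
    rw [Submonoid.closure_eq] at h1
    have hp' : p ∈ Submodule.span ℝ (GeM : Set C(X, ℝ)) := by
      rw [← h1, Subalgebra.mem_toSubmodule]; exact hp
    exact Submodule.span_le.mpr hGeT hp'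
  set B : Subalgebra ℝ C(X, ℝ) := A.topologicalClosure with hBdef
  have hB_closed : IsClosed (B : Set C(X, ℝ)) := A.isClosed_topologicalClosure
  have hBT : (B : Set C(X, ℝ)) ⊆ (T : Set C(X, ℝ)) := by
    rw [hBdef, Subalgebra.topologicalClosure_coe]
    exact closure_minimal hAT hT_closed
  -- two-point matching in B
  have hsep : ∀ x y : X, ∃ p ∈ (B : Set C(X, ℝ)), p x = F x ∧ p y = F y := by
    intro x y
    by_cases hfe : f x = f y
    · refine ⟨algebraMap ℝ C(X, ℝ) (f x), B.algebraMap_mem _, ?_, ?_⟩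
      · show algebraMap ℝ C(X, ℝ) (f x) x = f x
        simp
      · show algebraMap ℝ C(X, ℝ) (f x) y = f y
        simp [hfe]
    · have horb : ¬ SameOrbit G x y := by
        rintro ⟨g0, hg0⟩
        have := hfInv g0 x
        rw [hg0] at this
        exact hfe this.symm
      obtain ⟨h, hhC, hhne⟩ := hDisc x y horb
      set φ : C(X, ℝ) := ⟨fun z => Real.exp (h z), Real.continuous_exp.comp (hCont h hhC)⟩
        with hφdef
      have hφGe : φ ∈ (GeM : Set C(X, ℝ)) :=
        ⟨1, fun _ => h, fun _ => 1, fun _ => hhC, fun z => by simp [hφdef]⟩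
      have hφB : φ ∈ B := A.le_topologicalClosure (Algebra.subset_adjoin hφGe)
      have hφne : φ x ≠ φ y := fun e => hhne (Real.exp_injective e)
      have hφsub : φ x - φ y ≠ 0 := sub_ne_zero.mpr hφne
      set α : ℝ := (f x - f y) / (φ x - φ y) with hαdef
      have heval : ∀ z : X, (α • (φ - algebraMap ℝ C(X, ℝ) (φ y)) + algebraMap ℝ C(X, ℝ) (f y)) z
          = α * (φ z - φ y) + f y := by
        intro z; simp
      refine ⟨α • (φ - algebraMap ℝ C(X, ℝ) (φ y)) + algebraMap ℝ C(X, ℝ) (f y),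
        B.add_mem (B.smul_mem (B.sub_mem hφB (B.algebraMap_mem _)) _) (B.algebraMap_mem _),
        ?_, ?_⟩
      · rw [heval x]
        show α * (φ x - φ y) + f y = f x
        rw [hαdef]
        field_simp
        ring
      · rw [heval y]
        show α * (φ y - φ y) + f y = f y
        ring
    -- note: F z = f z definitionally
  have hFB : F ∈ closure (B : Set C(X, ℝ)) :=
    mem_closure_of_pointwise_pair_matching _ hX
      (fun p hp q hq => ContinuousMap.inf_mem_closed_subalgebra B hB_closed ⟨p, hp⟩ ⟨q, hq⟩)
      (fun p hp q hq => ContinuousMap.sup_mem_closed_subalgebra B hB_closed ⟨p, hp⟩ ⟨q, hq⟩)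
      F hsep
  have hFT : F ∈ (T : Set C(X, ℝ)) := hBT (by rwa [hB_closed.closure_eq] at hFB)
  rw [hTdef, SetLike.mem_coe, ← SetLike.mem_coe, Submodule.topologicalClosure_coe,
    Metric.mem_closure_iff] at hFT
  have hspanM : ∀ q : C(X, ℝ), q ∈ Submodule.span ℝ Ridge → ⇑q ∈ MLPClass 2 C := by
    intro q hq
    induction hq using Submodule.span_induction with
    | mem ψ hψ =>
      obtain ⟨k, v, a, b, hv, hψx⟩ := hψ
      have : ⇑ψ = fun x => max ((∑ i, a i * v i x) + b) 0 := funext hψx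
      rw [this]
      exact mlp2_ridge C k v a b hv
    | zero => exact mlp2_zero C
    | add ψ₁ ψ₂ h₁ h₂ ih₁ ih₂ =>
      have : ⇑(ψ₁ + ψ₂) = fun x => ψ₁ x + ψ₂ x := rfl
      rw [this]
      exact mlp2_add C _ _ ih₁ ih₂
    | smul a ψ hψ ih =>
      have : ⇑(a • ψ) = fun x => a * ψ x := rfl
      rw [this]
      exact mlp2_smul C a _ ih
  obtain ⟨p, hpmem, hdist⟩ := hFT ε hε
  rw [SetLike.mem_coe] at hpmem
  refine ⟨⇑p, hspanM p hpmem, fun x => ?_⟩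
  have h1 : dist (F x) (p x) ≤ dist F p := ContinuousMap.dist_apply_le_dist x
  have h2 : |f x - p x| = dist (F x) (p x) := by rw [Real.dist_eq]; rfl
  linarith [h1, h2.le, h2.ge, hdist]
end

section
/- Let (X, d) be a metric space, G a compact topological group acting continuously on X, and Y a compact subset of X. If C is a collection of continuous G-invariant functions from X to ℝ that locates every orbit over Y, then the class C^{+2} universally approximates every continuous G-invariant function on Y: for every continuous G-invariant f : X → ℝ and every ε > 0 there exists h ∈ C^{+2} with sup_{y∈Y} |f(y) − h(y)| < ε. -/
/-- The class `C` locates every orbit over `Y`: for every `y ∈ Y` and `ε > 0` there is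
`δ_y ∈ C` nonnegative over `Y`, vanishing on the orbit of `y` within `Y`, and with a
threshold `r_y > 0` such that `δ_y y′ < r_y` forces `y′` to be `ε`-close to the orbit
of `y`. -/
def LocatesOrbits (G : Type*) {X : Type*} [Group G] [MulAction G X] [MetricSpace X]
    (C : Set (X → ℝ)) (Y : Set X) : Prop :=
  ∀ y ∈ Y, ∀ ε > (0 : ℝ), ∃ δ ∈ C,
    (∀ y' ∈ Y, 0 ≤ δ y') ∧
    (∀ y' ∈ Y, SameOrbit G y y' → δ y' = 0) ∧
    ∃ r > (0 : ℝ), ∀ y' ∈ Y, δ y' < r → ∃ g : G, dist y' (g • y) < ε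

section Aux
open Set Finset

/-- Auxiliary: a one-hidden-layer ReLU network. -/
def Shallow (k : ℕ) (M : (Fin k → ℝ) → ℝ) : Prop :=
  ∃ (m : ℕ) (w : Fin m → ℝ) (A : Fin m → Fin k → ℝ) (b : Fin m → ℝ) (c : ℝ),
    M = fun z => (∑ i, w i * max ((∑ j, A i j * z j) + b i) 0) + c

lemma Shallow.isMLP2 {k : ℕ} {M : (Fin k → ℝ) → ℝ} (h : Shallow k M) : IsMLP 2 k M := by
  obtain ⟨m, w, A, b, c, rfl⟩ := h
  exact ⟨m, Matrix.of A, b, fun v => (∑ i, w i * v i) + c, ⟨w, c, rfl⟩, by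
    funext z
    simp [Matrix.mulVec, dotProduct]⟩

lemma Shallow.const (k : ℕ) (c : ℝ) : Shallow k (fun _ => c) :=
  ⟨0, fun i => i.elim0, fun i => i.elim0, fun i => i.elim0, c, by funext z; simp⟩

lemma Shallow.add {k : ℕ} {M₁ M₂ : (Fin k → ℝ) → ℝ} (h₁ : Shallow k M₁) (h₂ : Shallow k M₂) :
    Shallow k (fun z => M₁ z + M₂ z) := by
  obtain ⟨m₁, w₁, A₁, b₁, c₁, rfl⟩ := h₁
  obtain ⟨m₂, w₂, A₂, b₂, c₂, rfl⟩ := h₂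
  refine ⟨m₁ + m₂, Fin.append w₁ w₂, Fin.append A₁ A₂, Fin.append b₁ b₂, c₁ + c₂, ?_⟩
  funext z
  simp only [Fin.sum_univ_add, Fin.append_left, Fin.append_right]
  ring

lemma Shallow.sum {k : ℕ} {ι : Type*} (s : Finset ι) (F : ι → (Fin k → ℝ) → ℝ)
    (h : ∀ i ∈ s, Shallow k (F i)) : Shallow k (fun z => ∑ i ∈ s, F i z) := by
  classical
  induction s using Finset.cons_induction with
  | empty => simpa using Shallow.const k 0
  | cons a s ha ih =>
    simp only [Finset.sum_cons]
    exact (h a (Finset.mem_cons_self a s)).add (ih fun i hi => h i (Finset.mem_cons_of_mem hi))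

lemma Shallow.single {k : ℕ} (w : ℝ) (a : Fin k → ℝ) (b : ℝ) :
    Shallow k (fun z => w * max ((∑ j, a j * z j) + b) 0) :=
  ⟨1, fun _ => w, fun _ => a, fun _ => b, 0, by funext z; simp⟩

open Set Finset

/-- 1-D approximation of a continuous function by a ReLU ramp sum on `[-R, R]`. -/
lemma oneDim (φ : ℝ → ℝ) (hφ : Continuous φ) (R ε : ℝ) (hR : 0 < R) (hε : 0 < ε) :
    ∃ (N : ℕ) (u : ℕ → ℝ) (v : ℕ → ℝ) (c : ℝ),
      ∀ x ∈ Icc (-R) R,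
        |φ x - (c + ∑ j ∈ Finset.range N,
          u j * (max (x - v j) 0 - max (x - v (j + 1)) 0))| < ε := by
  -- uniform continuity on the compact interval
  have huc := (isCompact_Icc (a := -R) (b := R)).uniformContinuousOn_of_continuous
    hφ.continuousOn
  rw [Metric.uniformContinuousOn_iff] at huc
  obtain ⟨δ, hδ, hucd⟩ := huc (ε / 3) (by linarith)
  obtain ⟨N, hN⟩ := exists_nat_gt (2 * R / δ)
  have hN0 : 0 < N := by
    have h0 : (0 : ℝ) < 2 * R / δ := by positivity
    have : (0 : ℝ) < (N : ℝ) := lt_trans h0 hN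
    exact_mod_cast this
  set h : ℝ := 2 * R / N with hh
  have hhpos : 0 < h := by positivity
  have hhδ : h < δ := by
    have hNr : (0 : ℝ) < (N : ℝ) := by exact_mod_cast hN0
    rw [hh, div_lt_iff₀ hNr]
    have h1 : 2 * R < N * δ := by
      have := (div_lt_iff₀ hδ).mp hN
      linarith [this]
    linarith [h1, mul_comm (N : ℝ) δ]
  set t : ℕ → ℝ := fun j => -R + j * h with ht
  have htmono : ∀ {j j' : ℕ}, j ≤ j' → t j ≤ t j' := by
    intro j j' hjj
    simp only [ht]
    have : (j : ℝ) ≤ j' := by exact_mod_cast hjj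
    nlinarith
  have ht0 : t 0 = -R := by simp [ht]
  have htN : t N = R := by
    simp only [ht, hh]
    field_simp
    ring
  have htsucc : ∀ j : ℕ, t (j + 1) - t j = h := by
    intro j; simp only [ht]; push_cast; ring
  refine ⟨N, fun j => (φ (t (j + 1)) - φ (t j)) / h, t, φ (-R), ?_⟩
  intro x hx
  obtain ⟨hx1, hx2⟩ := hx
  -- locate x in the grid
  set l : ℕ := min (N - 1) ⌊(x + R) / h⌋₊ with hl
  have hlN : l + 1 ≤ N := by
    have : l ≤ N - 1 := min_le_left _ _
    omega
  have hxRnn : 0 ≤ (x + R) / h := div_nonneg (by linarith) hhpos.le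
  have htlx : t l ≤ x := by
    have h1 : (l : ℝ) ≤ (x + R) / h := by
      have : l ≤ ⌊(x + R) / h⌋₊ := min_le_right _ _
      calc (l : ℝ) ≤ (⌊(x + R) / h⌋₊ : ℝ) := by exact_mod_cast this
      _ ≤ (x + R) / h := Nat.floor_le hxRnn
    have : (l : ℝ) * h ≤ x + R := by
      rw [← div_mul_cancel₀ (x + R) (ne_of_gt hhpos)]
      exact mul_le_mul_of_nonneg_right h1 hhpos.le
    simp only [ht]; linarith
  have hxtl : x ≤ t (l + 1) := by
    rcases le_or_gt ⌊(x + R) / h⌋₊ (N - 1) with hc | hc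
    · have hle : l = ⌊(x + R) / h⌋₊ := min_eq_right hc
      have h2 : (x + R) / h < l + 1 := by
        rw [hle]; exact Nat.lt_floor_add_one _
      have : x + R < (l + 1) * h := by
        rw [← div_mul_cancel₀ (x + R) (ne_of_gt hhpos)]
        exact mul_lt_mul_of_pos_right (by exact_mod_cast h2) hhpos
      simp only [ht]; push_cast; linarith
    · have hle : l = N - 1 := min_eq_left hc.le
      have : l + 1 = N := by omega
      rw [this, htN]; exact hx2
  -- evaluate the sum
  set u : ℕ → ℝ := fun j => (φ (t (j + 1)) - φ (t j)) / h with hu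
  set σ : ℕ → ℝ := fun j => max (x - t j) 0 - max (x - t (j + 1)) 0 with hσ
  have hσhigh : ∀ j, l + 1 ≤ j → σ j = 0 := by
    intro j hj
    have h1 : x - t j ≤ 0 := by
      have := htmono hj; linarith [hxtl]
    have h2 : x - t (j + 1) ≤ 0 := by
      have := htmono (le_trans hj (Nat.le_succ j)); linarith [hxtl]
    simp [hσ, max_eq_right h1, max_eq_right h2]
  have hσlow : ∀ j, j < l → σ j = h := by
    intro j hj
    have h1 : 0 ≤ x - t j := by
      have := htmono (le_of_lt (Nat.lt_of_lt_of_le hj (Nat.le_refl l))); linarith [htlx, htmono hj.le]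
    have h2 : 0 ≤ x - t (j + 1) := by
      have : t (j + 1) ≤ t l := htmono hj
      linarith [htlx]
    rw [hσ]
    simp only [max_eq_left h1, max_eq_left h2]
    linarith [htsucc j]
  have hσl : σ l = x - t l := by
    rw [hσ]
    simp only [max_eq_left (by linarith : (0:ℝ) ≤ x - t l),
      max_eq_right (by linarith : x - t (l+1) ≤ 0)]
    ring
  have hsum : ∑ j ∈ Finset.range N, u j * σ j
      = (φ (t l) - φ (t 0)) + u l * σ l := by
    rw [← Finset.sum_range_add_sum_Ico _ hlN]
    have hz : ∑ j ∈ Finset.Ico (l + 1) N, u j * σ j = 0 :=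
      Finset.sum_eq_zero fun j hj => by
        rw [hσhigh j (Finset.mem_Ico.mp hj).1]; ring
    rw [hz, add_zero, Finset.sum_range_succ]
    congr 1
    have : ∀ j ∈ Finset.range l, u j * σ j = φ (t (j + 1)) - φ (t j) := by
      intro j hj
      rw [hσlow j (Finset.mem_range.mp hj), hu]
      field_simp
    rw [Finset.sum_congr rfl this, Finset.sum_range_sub (fun j => φ (t j))]
  -- bound
  have htlI : t l ∈ Icc (-R) R := by
    constructor
    · rw [← ht0]; exact htmono (Nat.zero_le l)
    · linarith [htlx]
  have htl1I : t (l + 1) ∈ Icc (-R) R := by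
    constructor
    · rw [← ht0]; exact htmono (Nat.zero_le (l + 1))
    · rw [← htN]; exact htmono hlN
  have hxI : x ∈ Icc (-R) R := ⟨hx1, hx2⟩
  have hb1 : |φ x - φ (t l)| < ε / 3 := by
    have := hucd x hxI (t l) htlI (by
      rw [Real.dist_eq]
      have : |x - t l| = x - t l := abs_of_nonneg (by linarith)
      rw [this]
      linarith [htsucc l, hxtl, hhδ])
    rwa [Real.dist_eq] at this
  have hb2 : |φ (t (l + 1)) - φ (t l)| < ε / 3 := by
    have := hucd (t (l + 1)) htl1I (t l) htlI (by
      rw [Real.dist_eq]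
      have h3 : t (l+1) - t l = h := htsucc l
      rw [abs_of_nonneg (by linarith)]
      linarith)
    rwa [Real.dist_eq] at this
  have hσlb : 0 ≤ σ l ∧ σ l ≤ h := by
    rw [hσl]; constructor <;> linarith [htsucc l, hxtl]
  have hul : |u l * σ l| ≤ ε / 3 := by
    rw [abs_mul, hu]
    have h1 : |(φ (t (l+1)) - φ (t l)) / h| = |φ (t (l+1)) - φ (t l)| / h := by
      rw [abs_div, abs_of_pos hhpos]
    rw [h1, abs_of_nonneg hσlb.1]
    calc |φ (t (l+1)) - φ (t l)| / h * σ l ≤ |φ (t (l+1)) - φ (t l)| / h * h := by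
          apply mul_le_mul_of_nonneg_left hσlb.2 (by positivity)
    _ = |φ (t (l+1)) - φ (t l)| := by field_simp
    _ ≤ ε / 3 := hb2.le
  show |φ x - (φ (-R) + ∑ j ∈ Finset.range N, u j * σ j)| < ε
  rw [hsum, ← ht0]
  have : φ x - (φ (t 0) + (φ (t l) - φ (t 0) + u l * σ l))
      = (φ x - φ (t l)) - u l * σ l := by ring
  rw [this]
  calc |(φ x - φ (t l)) - u l * σ l| ≤ |φ x - φ (t l)| + |u l * σ l| := abs_sub _ _
  _ < ε / 3 + ε / 3 := add_lt_add_of_lt_of_le hb1 hul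
  _ < ε := by linarith

/-- Shallow approximation of a ridge function `φ ∘ ℓ` on a compact set. -/
lemma shallow_approx_ridge {n : ℕ} (K : Set (Fin n → ℝ)) (hK : IsCompact K)
    (φ : ℝ → ℝ) (hφ : Continuous φ) (a : Fin n → ℝ) (b : ℝ) (ε : ℝ) (hε : 0 < ε) :
    ∃ M, Shallow n M ∧ ∀ z ∈ K, |φ ((∑ j, a j * z j) + b) - M z| < ε := by
  set ℓ : (Fin n → ℝ) → ℝ := fun z => (∑ j, a j * z j) + b with hℓ
  have hℓc : Continuous ℓ := by
    apply Continuous.add _ continuous_const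
    exact continuous_finset_sum _ fun j _ => continuous_const.mul (continuous_apply j)
  -- bound the range of ℓ on K
  obtain ⟨R₀, hR₀⟩ := (hK.image hℓc).isBounded.subset_closedBall 0
  set R : ℝ := |R₀| + 1 with hRdef
  have hR : 0 < R := by positivity
  have hrange : ∀ z ∈ K, ℓ z ∈ Set.Icc (-R) R := by
    intro z hz
    have : ℓ z ∈ Metric.closedBall (0 : ℝ) R₀ := hR₀ ⟨z, hz, rfl⟩
    rw [Metric.mem_closedBall, Real.dist_eq, sub_zero] at this
    have h1 : |ℓ z| ≤ R := le_trans this (by rw [hRdef]; linarith [le_abs_self R₀])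
    exact ⟨neg_le_of_abs_le h1, le_of_abs_le h1⟩
  obtain ⟨N, u, v, c, happ⟩ := oneDim φ hφ R ε hR hε
  refine ⟨fun z => c + ∑ j ∈ Finset.range N,
    (u j * max ((∑ i, a i * z i) + (b - v j)) 0
      + (-(u j)) * max ((∑ i, a i * z i) + (b - v (j + 1))) 0), ?_, ?_⟩
  · apply (Shallow.const n c).add
    apply Shallow.sum
    intro j _
    exact (Shallow.single (u j) a (b - v j)).add (Shallow.single (-(u j)) a (b - v (j + 1)))
  · intro z hz
    have := happ (ℓ z) (hrange z hz)
    have heq : (c + ∑ j ∈ Finset.range N,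
        (u j * max ((∑ i, a i * z i) + (b - v j)) 0
          + (-(u j)) * max ((∑ i, a i * z i) + (b - v (j + 1))) 0))
        = c + ∑ j ∈ Finset.range N, u j * (max (ℓ z - v j) 0 - max (ℓ z - v (j + 1)) 0) := by
      congr 1
      apply Finset.sum_congr rfl
      intro j _
      have e1 : (∑ i, a i * z i) + (b - v j) = ℓ z - v j := by rw [hℓ]; ring
      have e2 : (∑ i, a i * z i) + (b - v (j + 1)) = ℓ z - v (j + 1) := by rw [hℓ]; ring
      rw [e1, e2]; ring
    show |φ (ℓ z) - (c + ∑ j ∈ Finset.range N,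
        (u j * max ((∑ i, a i * z i) + (b - v j)) 0
          + (-(u j)) * max ((∑ i, a i * z i) + (b - v (j + 1))) 0))| < ε
    rw [heq]
    exact this

/-- Universal approximation of continuous functions on compact sets by shallow ReLU networks. -/
lemma shallow_universal {n : ℕ} (K : Set (Fin n → ℝ)) (hK : IsCompact K)
    (F : (Fin n → ℝ) → ℝ) (hF : Continuous F) (ε : ℝ) (hε : 0 < ε) :
    ∃ M, Shallow n M ∧ ∀ z ∈ K, |F z - M z| < ε := by
  classical
  rcases K.eq_empty_or_nonempty with rfl | hne
  · exact ⟨fun _ => 0, Shallow.const n 0, by simp⟩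
  haveI : CompactSpace ↥K := isCompact_iff_compactSpace.mp hK
  -- the submonoid of exponential-ridge functions
  set E : Set C(↥K, ℝ) := {g | ∃ (a : Fin n → ℝ) (b : ℝ),
      ∀ z : ↥K, g z = Real.exp ((∑ j, a j * (z : Fin n → ℝ) j) + b)} with hEdef
  have hone : (1 : C(↥K, ℝ)) ∈ E := ⟨0, 0, fun z => by simp⟩
  have hmul : ∀ {g₁ g₂ : C(↥K, ℝ)}, g₁ ∈ E → g₂ ∈ E → g₁ * g₂ ∈ E := by
    rintro g₁ g₂ ⟨a₁, b₁, h₁⟩ ⟨a₂, b₂, h₂⟩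
    refine ⟨a₁ + a₂, b₁ + b₂, fun z => ?_⟩
    rw [ContinuousMap.mul_apply, h₁ z, h₂ z, ← Real.exp_add]
    congr 1
    simp only [Pi.add_apply, add_mul, Finset.sum_add_distrib]
    ring
  set Esub : Submonoid C(↥K, ℝ) :=
    { carrier := E, one_mem' := hone, mul_mem' := fun h1 h2 => hmul h1 h2 } with hEsub
  set A : Subalgebra ℝ C(↥K, ℝ) := Algebra.adjoin ℝ E with hA
  have hsep : A.SeparatesPoints := by
    intro z₁ z₂ hz
    have hvne : (z₁ : Fin n → ℝ) ≠ (z₂ : Fin n → ℝ) := fun h => hz (Subtype.ext h)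
    set a : Fin n → ℝ := fun j => (z₁ : Fin n → ℝ) j - (z₂ : Fin n → ℝ) j with ha
    have hsum : (∑ j, a j * (z₁ : Fin n → ℝ) j) ≠ (∑ j, a j * (z₂ : Fin n → ℝ) j) := by
      intro hcon
      apply hvne
      funext j
      have h0 : ∑ j, (a j * (z₁ : Fin n → ℝ) j - a j * (z₂ : Fin n → ℝ) j) = 0 := by
        rw [Finset.sum_sub_distrib, hcon, sub_self]
      have h1 : ∑ j, a j ^ 2 = 0 := by
        rw [← h0]
        apply Finset.sum_congr rfl
        intro j _
        rw [ha]; ring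
      have h2 : ∀ j, a j = 0 := by
        intro j
        have := Finset.sum_eq_zero_iff_of_nonneg
          (fun i (_ : i ∈ Finset.univ) => sq_nonneg (a i)) |>.mp h1 j (Finset.mem_univ j)
        exact pow_eq_zero_iff (by norm_num) |>.mp this
      have h3 : (z₁ : Fin n → ℝ) j - (z₂ : Fin n → ℝ) j = 0 := h2 j
      linarith
    have hgc : Continuous fun z : ↥K => Real.exp ((∑ j, a j * (z : Fin n → ℝ) j) + 0) := by
      apply Real.continuous_exp.comp
      apply Continuous.add _ continuous_const
      exact continuous_finset_sum _ fun j _ =>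
        continuous_const.mul ((continuous_apply j).comp continuous_subtype_val)
    refine ⟨_, ⟨ContinuousMap.mk _ hgc, Algebra.subset_adjoin ⟨a, 0, fun z => rfl⟩, rfl⟩, ?_⟩
    simp only [ContinuousMap.coe_mk]
    intro hcon
    exact hsum (by
      have := Real.exp_injective hcon
      simpa using this)
  obtain ⟨gs, hgnear⟩ := ContinuousMap.exists_mem_subalgebra_near_continuous_of_separatesPoints
    A hsep (fun z : ↥K => F z) (hF.comp continuous_subtype_val) (ε / 2) (by linarith)
  set g : C(↥K, ℝ) := (gs : C(↥K, ℝ)) with hgdef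
  -- decompose g as a finite linear combination of exp-ridge functions
  have hgspan : g ∈ Submodule.span ℝ E := by
    have h1 : g ∈ Subalgebra.toSubmodule A := gs.2
    rw [hA, Algebra.adjoin_eq_span] at h1
    rwa [show Submonoid.closure E = Esub from Submonoid.closure_eq Esub ▸ rfl,
      show ((Esub : Submonoid C(↥K, ℝ)) : Set C(↥K, ℝ)) = E from rfl] at h1
  obtain ⟨m, cf, gf, hgsum⟩ := Submodule.mem_span_set'.mp hgspan
  choose av bv hab using fun i => (gf i).2
  -- approximate each term by a shallow network
  have hterm : ∀ i : Fin m, ∃ M, Shallow n M ∧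
      ∀ z ∈ K, |cf i * Real.exp ((∑ j, av i j * z j) + bv i) - M z| < ε / (2 * (m + 1)) := by
    intro i
    exact shallow_approx_ridge K hK (fun u => cf i * Real.exp u)
      (continuous_const.mul Real.continuous_exp) (av i) (bv i) _ (by positivity)
  choose Ms hMs hMerr using hterm
  refine ⟨fun z => ∑ i, Ms i z, Shallow.sum Finset.univ _ (fun i _ => hMs i), ?_⟩
  intro z hz
  set zz : ↥K := ⟨z, hz⟩ with hzz
  have hg_eval : g zz = ∑ i, cf i * Real.exp ((∑ j, av i j * z j) + bv i) := by
    rw [← hgsum]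
    have : ((∑ i, cf i • ((gf i : C(↥K, ℝ)))) : C(↥K, ℝ)) zz
        = ∑ i, cf i * ((gf i : C(↥K, ℝ))) zz := by
      rw [ContinuousMap.coe_sum]
      simp [Finset.sum_apply]
    rw [this]
    apply Finset.sum_congr rfl
    intro i _
    rw [hab i zz]
  have h1 : |F z - g zz| < ε / 2 := by
    have := hgnear zz
    rw [Real.norm_eq_abs] at this
    rw [abs_sub_comm]
    exact this
  have h2 : |g zz - ∑ i, Ms i z| ≤ ε / 2 := by
    rw [hg_eval, ← Finset.sum_sub_distrib]
    calc |∑ i, (cf i * Real.exp ((∑ j, av i j * z j) + bv i) - Ms i z)|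
        ≤ ∑ i, |cf i * Real.exp ((∑ j, av i j * z j) + bv i) - Ms i z| :=
          Finset.abs_sum_le_sum_abs _ _
    _ ≤ ∑ _i : Fin m, ε / (2 * (m + 1)) :=
          Finset.sum_le_sum fun i _ => (hMerr i z hz).le
    _ = m * (ε / (2 * (m + 1))) := by rw [Finset.sum_const]; simp [mul_comm]
    _ ≤ ε / 2 := by
          have h2m : (0:ℝ) < 2 * ((m:ℝ) + 1) := by positivity
          have hre : (m:ℝ) * (ε / (2 * ((m:ℝ) + 1))) = ε * ((m:ℝ) / (2 * ((m:ℝ) + 1))) := by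
            ring
          rw [hre]
          have hfr : (m:ℝ) / (2 * ((m:ℝ) + 1)) ≤ 1 / 2 := by
            rw [div_le_div_iff₀ h2m (by norm_num)]
            nlinarith [Nat.cast_nonneg (α := ℝ) m]
          calc ε * ((m:ℝ) / (2 * ((m:ℝ) + 1))) ≤ ε * (1 / 2) :=
                mul_le_mul_of_nonneg_left hfr hε.le
          _ = ε / 2 := by ring
  calc |F z - ∑ i, Ms i z| ≤ |F z - g zz| + |g zz - ∑ i, Ms i z| := abs_sub_le _ _ _
  _ < ε / 2 + ε / 2 := add_lt_add_of_lt_of_le h1 h2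
  _ = ε := by ring

end Aux

/-- Let `X` be a metric space, `G` a compact topological group acting continuously on `X`,
and `Y` a compact subset of `X`.  If `C` is a collection of continuous `G`-invariant
functions that locates every orbit over `Y`, then `C^{+2}` universally approximates every
continuous `G`-invariant function on `Y`. -/
theorem locates_orbits_implies_plus_two_universal
    {G X : Type*} [Group G] [TopologicalSpace G] [IsTopologicalGroup G] [CompactSpace G]
    [MetricSpace X] [MulAction G X] [ContinuousSMul G X]
    (Y : Set X) (hY : IsCompact Y) (C : Set (X → ℝ))
    (hCont : ∀ h ∈ C, Continuous h)
    (hInv : ∀ h ∈ C, GInvariant G h)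
    (hLoc : LocatesOrbits G C Y) :
    ∀ f : X → ℝ, Continuous f → GInvariant G f →
      ∀ ε > (0 : ℝ), ∃ h ∈ MLPClass 2 C, ∀ y ∈ Y, |f y - h y| < ε := by
  intro f hf hfInv ε hε
  classical
  rcases Y.eq_empty_or_nonempty with rfl | hYne
  · exact ⟨fun _ => (0 : ℝ), ⟨0, fun i => i.elim0, fun _ => 0, fun i => i.elim0,
      (Shallow.const 0 0).isMLP2, fun x => rfl⟩, by simp⟩
  set ε₁ : ℝ := ε / 5 with hε₁def
  have hε₁ : 0 < ε₁ := by rw [hε₁def]; linarith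
  -- the orbit of Y is compact, and f is uniformly continuous on it
  set K₀ : Set X := (fun p : G × X => p.1 • p.2) '' (Set.univ ×ˢ Y) with hK₀def
  have hK₀c : IsCompact K₀ := (isCompact_univ.prod hY).image continuous_smul
  have hYK₀ : Y ⊆ K₀ := fun x hx => ⟨(1, x), ⟨Set.mem_univ _, hx⟩, one_smul G x⟩
  have huc := hK₀c.uniformContinuousOn_of_continuous hf.continuousOn
  rw [Metric.uniformContinuousOn_iff] at huc
  obtain ⟨η, hη, hucd⟩ := huc ε₁ hε₁
  -- a bound on f over Y
  obtain ⟨B₀, hB₀⟩ := (hY.image (continuous_abs.comp hf)).bddAbove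
  set B : ℝ := max B₀ 1 with hBdef
  have hB1 : (1 : ℝ) ≤ B := le_max_right _ _
  have hB0 : (0 : ℝ) < B := lt_of_lt_of_le one_pos hB1
  have hfB : ∀ x ∈ Y, |f x| ≤ B := fun x hx =>
    le_trans (hB₀ ⟨x, hx, rfl⟩) (le_max_left _ _)
  -- choose locating functions
  have hch : ∀ y : ↥Y, ∃ δ, δ ∈ C ∧ (∀ y' ∈ Y, 0 ≤ δ y') ∧
      (∀ y' ∈ Y, SameOrbit G (↑y) y' → δ y' = 0) ∧
      ∃ r, r > 0 ∧ ∀ y' ∈ Y, δ y' < r → ∃ g : G, dist y' (g • (y : X)) < η := by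
    intro y
    obtain ⟨δ, hδC, h1, h2, r, hr, h3⟩ := hLoc y y.2 η hη
    exact ⟨δ, hδC, h1, h2, r, hr, h3⟩
  choose D hDC hDnn hDvan r hrpos hDloc using hch
  set s : ↥Y → ℝ := fun y => min (r y / 2) (ε₁ * r y / (2 * B)) with hsdef
  have hspos : ∀ y, 0 < s y := fun y =>
    lt_min (by have := hrpos y; linarith) (by have := hrpos y; positivity)
  set U : ↥Y → Set X := fun y => D y ⁻¹' Set.Iio (s y) with hUdef
  have hUopen : ∀ y, IsOpen (U y) := fun y => isOpen_Iio.preimage (hCont _ (hDC y))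
  have hcover : Y ⊆ ⋃ y : ↥Y, U y := by
    intro x hx
    refine Set.mem_iUnion.mpr ⟨⟨x, hx⟩, ?_⟩
    have h0 : D ⟨x, hx⟩ x = 0 := hDvan ⟨x, hx⟩ x hx ⟨1, one_smul G x⟩
    simp only [hUdef, Set.mem_preimage, Set.mem_Iio, h0]
    exact hspos _
  obtain ⟨t, htcov⟩ := hY.elim_finite_subcover U hUopen hcover
  have htne : t.Nonempty := by
    obtain ⟨x₀, hx₀⟩ := hYne
    obtain ⟨y, hyt, _⟩ := Set.mem_iUnion₂.mp (htcov hx₀)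
    exact ⟨y, hyt⟩
  set n := t.card with hndef
  have hn : 0 < n := Finset.card_pos.mpr htne
  haveI : Nonempty (Fin n) := Fin.pos_iff_nonempty.mp hn
  set eqv := t.equivFin with heqv
  set idx : Fin n → ↥Y := fun i => ((eqv.symm i : ↥t) : ↥Y) with hidx
  set δi : Fin n → X → ℝ := fun i => D (idx i) with hδi
  set ci : Fin n → ℝ := fun i => f ((idx i : ↥Y) : X) with hci
  set ri : Fin n → ℝ := fun i => r (idx i) with hri
  set Φ : X → Fin n → ℝ := fun x i => δi i x with hΦ
  have hripos : ∀ i, 0 < ri i := fun i => hrpos (idx i)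
  set lam : Fin n → ℝ := fun i => 2 * B / ri i with hlam
  have hlampos : ∀ i, 0 < lam i := fun i => div_pos (by linarith) (hripos i)
  -- key estimates
  have hkey1 : ∀ (i : Fin n) (x : X), x ∈ Y → δi i x < ri i → |f x - ci i| < ε₁ := by
    intro i x hx hlt
    obtain ⟨g, hg⟩ := hDloc (idx i) x hx hlt
    have hgK : g • ((idx i : ↥Y) : X) ∈ K₀ :=
      ⟨(g, ((idx i : ↥Y) : X)), ⟨Set.mem_univ _, (idx i).2⟩, rfl⟩
    have hd := hucd x (hYK₀ hx) _ hgK hg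
    rw [Real.dist_eq, hfInv g (((idx i : ↥Y) : X))] at hd
    exact hd
  have hkey2 : ∀ x ∈ Y, ∃ i : Fin n, δi i x < s (idx i) := by
    intro x hx
    obtain ⟨y, hyt, hxU⟩ := Set.mem_iUnion₂.mp (htcov hx)
    refine ⟨eqv ⟨y, hyt⟩, ?_⟩
    have hidxeq : idx (eqv ⟨y, hyt⟩) = y := by
      simp [hidx, Equiv.symm_apply_apply]
    simp only [hδi, hidxeq]
    simpa [hUdef] using hxU
  -- the envelope function
  set Ft : (Fin n → ℝ) → ℝ := fun z =>
    Finset.univ.inf' Finset.univ_nonempty (fun i => ci i + ε₁ + lam i * max (z i) 0) with hFt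
  have hFtc : Continuous Ft := by
    apply Continuous.finset_inf'_apply
    intro i _
    exact continuous_const.add (continuous_const.mul
      ((continuous_apply i).max continuous_const))
  have hmax : ∀ (i : Fin n) (x : X), x ∈ Y → max (Φ x i) 0 = δi i x := by
    intro i x hx
    exact max_eq_left (hDnn (idx i) x hx)
  have hlow : ∀ x ∈ Y, f x ≤ Ft (Φ x) := by
    intro x hx
    apply Finset.le_inf'
    intro i _
    rcases lt_or_ge (δi i x) (ri i) with hlt | hge
    · have h1 : f x - ci i < ε₁ := lt_of_le_of_lt (le_abs_self _) (hkey1 i x hx hlt)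
      have h2 : 0 ≤ lam i * max (Φ x i) 0 :=
        mul_nonneg (hlampos i).le (le_max_right _ 0)
      linarith
    · have hciB : |ci i| ≤ B := hfB _ (idx i).2
      have hfxB : f x ≤ B := le_trans (le_abs_self _) (hfB x hx)
      have h2 : 2 * B ≤ lam i * max (Φ x i) 0 := by
        rw [hmax i x hx]
        calc (2 : ℝ) * B = lam i * ri i :=
              (div_mul_cancel₀ _ (ne_of_gt (hripos i))).symm
        _ ≤ lam i * δi i x := mul_le_mul_of_nonneg_left hge (hlampos i).le
      have h3 : -B ≤ ci i := neg_le_of_abs_le hciB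
      linarith
  have hup : ∀ x ∈ Y, Ft (Φ x) ≤ f x + 3 * ε₁ := by
    intro x hx
    obtain ⟨i, hi⟩ := hkey2 x hx
    have hsle1 : s (idx i) ≤ ri i / 2 := min_le_left _ _
    have hlt : δi i x < ri i := by
      have := hripos i
      calc δi i x < s (idx i) := hi
      _ ≤ ri i / 2 := hsle1
      _ < ri i := by linarith
    have h1 := hkey1 i x hx hlt
    have h1' : ci i ≤ f x + ε₁ := by
      have := abs_lt.mp h1
      linarith [this.1]
    have h2 : lam i * max (Φ x i) 0 ≤ ε₁ := by
      rw [hmax i x hx]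
      calc lam i * δi i x ≤ lam i * s (idx i) :=
            mul_le_mul_of_nonneg_left hi.le (hlampos i).le
      _ ≤ lam i * (ε₁ * ri i / (2 * B)) :=
            mul_le_mul_of_nonneg_left (min_le_right _ _) (hlampos i).le
      _ = ε₁ := by
            rw [hlam]
            have hr' : ri i ≠ 0 := ne_of_gt (hripos i)
            have hB' : B ≠ 0 := ne_of_gt hB0
            field_simp
    calc Ft (Φ x) ≤ ci i + ε₁ + lam i * max (Φ x i) 0 :=
          Finset.inf'_le _ (Finset.mem_univ i)
    _ ≤ (f x + ε₁) + ε₁ + ε₁ := by linarith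
    _ = f x + 3 * ε₁ := by ring
  -- apply universal approximation
  have hKc : IsCompact (Φ '' Y) :=
    hY.image (continuous_pi fun i => hCont _ (hDC (idx i)))
  obtain ⟨M, hMsh, hMerr⟩ := shallow_universal (Φ '' Y) hKc Ft hFtc ε₁ hε₁
  refine ⟨fun x => M (Φ x),
    ⟨n, δi, M, fun i => hDC (idx i), hMsh.isMLP2, fun x => rfl⟩, ?_⟩
  intro y hy
  have hM := hMerr (Φ y) ⟨y, hy, rfl⟩
  have hl := hlow y hy
  have hu := hup y hy
  have habs : |f y - Ft (Φ y)| ≤ 3 * ε₁ := abs_le.mpr ⟨by linarith, by linarith⟩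
  calc |f y - M (Φ y)| ≤ |f y - Ft (Φ y)| + |Ft (Φ y) - M (Φ y)| := abs_sub_le _ _ _
  _ < 3 * ε₁ + ε₁ := add_lt_add_of_le_of_lt habs hM
  _ < ε := by rw [hε₁def] at *; linarith
end

section
/- Let n ≥ d − 1 > 0 and let X be an n×d real matrix whose rows have pairwise distinct Euclidean norms and whose rows span a linear subspace of ℝ^d of dimension at least d − 1. If P is an n×n permutation matrix and Q ∈ SO(d) is a d×d special orthogonal matrix such that P X Qᵀ = X, then P = Iₙ and Q = I_d. In other words, the action of S_n × SO(d) on such matrices is free. -/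
open scoped Matrix

/-- The Euclidean norm of row `i` of the matrix `X`. -/
noncomputable def rowNorm {n d : ℕ} (X : Matrix (Fin n) (Fin d) ℝ) (i : Fin n) : ℝ :=
  Real.sqrt (∑ k, X i k ^ 2)

/-- Let `n ≥ d − 1 > 0` and let `X` be an `n×d` real matrix whose rows have pairwise
distinct Euclidean norms and whose rows span a subspace of dimension at least `d − 1`
(i.e. `X` has rank at least `d − 1`).  If `P` is a permutation matrix and `Q ∈ SO(d)`
with `P X Qᵀ = X`, then `P = 1` and `Q = 1`: the action of `S_n × SO(d)` on such
matrices is free. -/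
theorem sn_so_action_free {n d : ℕ} (hd : 0 < d - 1) (hnd : d - 1 ≤ n)
    (X : Matrix (Fin n) (Fin d) ℝ)
    (hnorm : ∀ i j : Fin n, i ≠ j → rowNorm X i ≠ rowNorm X j)
    (hrank : d - 1 ≤ X.rank)
    (σ : Equiv.Perm (Fin n)) (Q : Matrix (Fin d) (Fin d) ℝ)
    (hQ : Q * Qᵀ = 1) (hdet : Q.det = 1)
    (hfix : σ.permMatrix ℝ * X * Qᵀ = X) :
    σ.permMatrix ℝ = 1 ∧ Q = 1 := by
  have hQ' : Qᵀ * Q = 1 := mul_eq_one_comm.mp hQ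
  -- multiplication by `Qᵀ` on the right preserves the sum of squares of a vector
  have hpres : ∀ v : Fin d → ℝ, ∑ k, (v ᵥ* Qᵀ) k ^ 2 = ∑ k, v k ^ 2 := by
    intro v
    have h1 : ∀ w : Fin d → ℝ, ∑ k, w k ^ 2 = w ⬝ᵥ w := by
      intro w; simp [dotProduct, sq]
    rw [h1, h1]
    calc (v ᵥ* Qᵀ) ⬝ᵥ (v ᵥ* Qᵀ)
        = (v ᵥ* Qᵀ) ⬝ᵥ (Q *ᵥ v) := by rw [Matrix.vecMul_transpose]
      _ = v ⬝ᵥ (Qᵀ *ᵥ (Q *ᵥ v)) := (Matrix.dotProduct_mulVec v Qᵀ (Q *ᵥ v)).symm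
      _ = v ⬝ᵥ ((Qᵀ * Q) *ᵥ v) := by rw [Matrix.mulVec_mulVec]
      _ = v ⬝ᵥ v := by rw [hQ', Matrix.one_mulVec]
  -- rows get permuted and rotated
  have hperm : σ.permMatrix ℝ * X = X.submatrix σ id :=
    PEquiv.toMatrix_toPEquiv_mul σ X
  rw [hperm] at hfix
  have hrow : ∀ i, X (σ i) ᵥ* Qᵀ = X i := by
    intro i
    ext k
    have := congrFun (congrFun hfix i) k
    simpa [Matrix.mul_apply, Matrix.vecMul, dotProduct,
      Matrix.submatrix_apply] using this
  have hσ : ∀ i, σ i = i := by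
    intro i
    by_contra h
    apply hnorm (σ i) i h
    unfold rowNorm
    rw [← hrow i, hpres]
  have hP : σ.permMatrix ℝ = 1 := by
    have hσ1 : σ = 1 := Equiv.ext hσ
    rw [hσ1]
    ext i j
    simp [Equiv.Perm.permMatrix, PEquiv.toMatrix_apply, Equiv.toPEquiv_apply,
      Matrix.one_apply]
  have hfix2 : X * Qᵀ = X := by
    have hσ1 : σ = 1 := Equiv.ext hσ
    rw [hσ1] at hfix
    simpa using hfix
  refine ⟨hP, ?_⟩
  -- Part 2: Q = 1
  obtain ⟨M, hMdef⟩ : ∃ M : Matrix (Fin d) (Fin d) ℝ, M = Q - 1 := ⟨Q - 1, rfl⟩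
  have hXM : X * Mᵀ = 0 := by
    rw [hMdef, Matrix.transpose_sub, Matrix.mul_sub, hfix2, Matrix.transpose_one,
      Matrix.mul_one, sub_self]
  have hMX : M * Xᵀ = 0 := by
    have := congrArg Matrix.transpose hXM
    simpa [Matrix.transpose_mul] using this
  have hker : LinearMap.range (Xᵀ.mulVecLin) ≤ LinearMap.ker M.mulVecLin := by
    rintro _ ⟨v, rfl⟩
    simp only [LinearMap.mem_ker, Matrix.mulVecLin_apply, Matrix.mulVec_mulVec, hMX,
      Matrix.zero_mulVec]
  have hfd : Module.finrank ℝ (Fin d → ℝ) = d := by simp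
  have hrank' : d - 1 ≤ Module.finrank ℝ (LinearMap.ker M.mulVecLin) := by
    calc d - 1 ≤ X.rank := hrank
      _ = Xᵀ.rank := (Matrix.rank_transpose X).symm
      _ = Module.finrank ℝ (LinearMap.range Xᵀ.mulVecLin) := rfl
      _ ≤ _ := Submodule.finrank_mono hker
  have hrn := LinearMap.finrank_range_add_finrank_ker M.mulVecLin
  rw [hfd] at hrn
  have hrange1 : Module.finrank ℝ (LinearMap.range M.mulVecLin) ≤ 1 := by omega
  by_cases hM : M = 0
  · rw [hMdef, sub_eq_zero] at hM; exact hM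
  exfalso
  have hcol : ∀ j, (fun i => M i j) ∈ LinearMap.range M.mulVecLin := by
    intro j
    exact ⟨Pi.single j 1, by simp [Matrix.mulVecLin_apply]; rfl⟩
  have hex : ∃ j i, M i j ≠ 0 := by
    by_contra h
    push_neg at h
    exact hM (Matrix.ext fun i j => h j i)
  obtain ⟨j₀, i₀, h0⟩ := hex
  obtain ⟨x, hxdef⟩ : ∃ x : Fin d → ℝ, x = fun i => M i j₀ := ⟨_, rfl⟩
  have hx : x ≠ 0 := fun h => h0 (by simpa [hxdef] using congrFun h i₀)
  have hspan : (ℝ ∙ x) = LinearMap.range M.mulVecLin := by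
    apply Submodule.eq_of_le_of_finrank_le
    · exact (Submodule.span_singleton_le_iff_mem x _).mpr (by rw [hxdef]; exact hcol j₀)
    · exact hrange1.trans (finrank_span_singleton hx).ge
  have hy : ∀ j, ∃ c : ℝ, c • x = (fun i => M i j) := by
    intro j
    exact Submodule.mem_span_singleton.mp (hspan ▸ hcol j)
  choose y hy using hy
  have hMij : ∀ i j, M i j = x i * y j := by
    intro i j
    have := congrFun (hy j) i
    simp only [Pi.smul_apply, smul_eq_mul] at this
    rw [← this]; ring
  have hM2 : M = Matrix.replicateCol Unit x * Matrix.replicateRow Unit y := by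
    ext i j
    simp [Matrix.mul_apply, hMij i j]
  have hQM : Q = 1 + M := by rw [hMdef]; abel
  have htr : y ⬝ᵥ x = 0 := by
    have h1 : Q.det = 1 + y ⬝ᵥ x := by
      rw [hQM, hM2, Matrix.det_one_add_replicateCol_mul_replicateRow]
    rw [hdet] at h1
    linarith
  have hMMT : M * Mᵀ = -(M + Mᵀ) := by
    have h1 : (1 + M) * (1 + M)ᵀ = 1 := by rw [← hQM]; exact hQ
    have h2 : 1 + Mᵀ + M + M * Mᵀ = 1 := by
      calc 1 + Mᵀ + M + M * Mᵀ = (1 + M) * (1 + M)ᵀ := by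
            rw [Matrix.transpose_add, Matrix.transpose_one, Matrix.mul_add,
              Matrix.mul_one, Matrix.add_mul, Matrix.one_mul]
            abel
        _ = 1 := h1
    have h3 : M * Mᵀ = 1 - (1 + Mᵀ + M) := eq_sub_of_add_eq' h2
    rw [h3]; abel
  have htrM : Matrix.trace M = 0 := by
    have h1 : Matrix.trace M = ∑ i, x i * y i := by
      simp [Matrix.trace, Matrix.diag]
      exact Finset.sum_congr rfl fun i _ => hMij i i
    rw [h1]
    simpa [dotProduct, mul_comm] using htr
  have hL : Matrix.trace (M * Mᵀ) = ∑ i, ∑ j, M i j ^ 2 := by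
    simp [Matrix.trace, Matrix.diag, Matrix.mul_apply, sq, Matrix.transpose_apply]
  have hR : Matrix.trace (-(M + Mᵀ)) = 0 := by
    rw [Matrix.trace_neg, Matrix.trace_add, Matrix.trace_transpose, htrM]
    simp
  have hzero : ∑ i, ∑ j, M i j ^ 2 = 0 := by rw [← hL, hMMT, hR]
  have hnn : ∀ i ∈ Finset.univ, (0:ℝ) ≤ ∑ j, M i j ^ 2 :=
    fun i _ => Finset.sum_nonneg fun j _ => sq_nonneg _
  have h4 := (Finset.sum_eq_zero_iff_of_nonneg hnn).mp hzero i₀ (Finset.mem_univ _)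
  have h5 := (Finset.sum_eq_zero_iff_of_nonneg
    (fun j _ => sq_nonneg (M i₀ j))).mp h4 j₀ (Finset.mem_univ _)
  exact h0 (by simpa using pow_eq_zero_iff (n := 2) (by norm_num) |>.mp h5)
end
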